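/- arXiv:1409.7955 — 3 statements merged into one kernel-verified Lean document; each statement's English description precedes it below -/
import Mathlib

section
/- Let Γ be a finitely generated torsion-free nilpotent group. Then the subgroup counting function is multiplicative: for all m, n ∈ ℕ with gcd(m, n) = 1, one has a_{mn}(Γ) = a_m(Γ)·a_n(Γ). -/
set_option linter.unusedSectionVars false
set_option linter.unusedVariables false

set_option linter.unusedSectionVars false

open Subgroup

-- Lemma D
theorem myEqOfLeIndex {G : Type*} [Group G] {A B : Subgroup G} (hle : A ≤ B)
    (h : A.index = B.index) (h0 : A.index ≠ 0) : A = B := by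
  have := Subgroup.relIndex_mul_index hle
  rw [h] at this
  have hB : B.index ≠ 0 := h ▸ h0
  have h1 : A.relIndex B = 1 := by
    have hB' : (B.index : ℕ) ≠ 0 := hB
    exact mul_right_cancel₀ hB' (by rw [this, one_mul])
  exact le_antisymm hle (Subgroup.relIndex_eq_one.mp h1)

-- Lemma E pieces
theorem myCardSup {G : Type*} [Group G] [Finite G] (A B : Subgroup G) [B.Normal] :
    Nat.card (A ⊔ B : Subgroup G) ∣ Nat.card A * Nat.card B := by
  have h2 : B.relIndex A = B.relIndex (A ⊔ B) := by
    have := Nat.card_congr (QuotientGroup.quotientInfEquivProdNormalQuotient A B).toEquiv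
    simpa [Subgroup.relIndex, Subgroup.index_eq_card] using this
  have h3 : Nat.card (B.subgroupOf (A ⊔ B)) = Nat.card B :=
    Nat.card_congr (Subgroup.subgroupOfEquivOfLe le_sup_right).toEquiv
  have h4 : (B.subgroupOf (A ⊔ B)).index * Nat.card (B.subgroupOf (A ⊔ B))
      = Nat.card (A ⊔ B : Subgroup G) := Subgroup.index_mul_card _
  rw [h3] at h4
  have h5 : B.relIndex A ∣ Nat.card A := Subgroup.index_dvd_card (B.subgroupOf A)
  rw [← h4]
  show B.relIndex (A ⊔ B) * Nat.card B ∣ _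
  rw [← h2]
  exact mul_dvd_mul_right h5 _

theorem myRelindexSup {G : Type*} [Group G] [Finite G] (A B : Subgroup G) [B.Normal] :
    A.relIndex (A ⊔ B) ∣ Nat.card B := by
  have h2 : B.relIndex A = B.relIndex (A ⊔ B) := by
    have := Nat.card_congr (QuotientGroup.quotientInfEquivProdNormalQuotient A B).toEquiv
    simpa [Subgroup.relIndex, Subgroup.index_eq_card] using this
  have hA : Nat.card (A.subgroupOf (A ⊔ B)) = Nat.card A :=
    Nat.card_congr (Subgroup.subgroupOfEquivOfLe le_sup_left).toEquiv
  have hB : Nat.card (B.subgroupOf (A ⊔ B)) = Nat.card B :=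
    Nat.card_congr (Subgroup.subgroupOfEquivOfLe le_sup_right).toEquiv
  have h4 : (B.subgroupOf (A ⊔ B)).index * Nat.card B = Nat.card (A ⊔ B : Subgroup G) := by
    rw [← hB]; exact Subgroup.index_mul_card _
  have h5 : (A.subgroupOf (A ⊔ B)).index * Nat.card A = Nat.card (A ⊔ B : Subgroup G) := by
    rw [← hA]; exact Subgroup.index_mul_card _
  have h6 : B.relIndex A ∣ Nat.card A := Subgroup.index_dvd_card (B.subgroupOf A)
  obtain ⟨c, hc⟩ := h6
  have hrel0 : B.relIndex A ≠ 0 := by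
    have : Nat.card A ≠ 0 := Nat.card_pos.ne'
    intro h; rw [hc, h, zero_mul] at this; exact this rfl
  have key : A.relIndex (A ⊔ B) * (B.relIndex A * c) = B.relIndex A * Nat.card B := by
    rw [← hc]
    show A.relIndex (A ⊔ B) * Nat.card A = B.relIndex A * Nat.card B
    rw [h2]
    exact h5.trans h4.symm
  refine ⟨c, ?_⟩
  have := key
  rw [mul_comm (B.relIndex A) c, ← mul_assoc] at this
  exact (mul_left_cancel₀ hrel0 (by rw [← this]; ring)).symm

theorem myNormalLeOfCoprime {G : Type*} [Group G] [Finite G] {B K : Subgroup G} [B.Normal]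
    (h : Nat.Coprime (Nat.card B) K.index) : B ≤ K := by
  have h1 : K.relIndex (K ⊔ B) ∣ Nat.card B := myRelindexSup K B
  have h2 : K.relIndex (K ⊔ B) ∣ K.index :=
    ⟨(K ⊔ B).index, (Subgroup.relIndex_mul_index (le_sup_left : K ≤ K ⊔ B)).symm⟩
  have h3 : K.relIndex (K ⊔ B) = 1 := Nat.eq_one_of_dvd_coprimes h h1 h2
  exact le_sup_right.trans (Subgroup.relIndex_eq_one.mp h3)

open scoped Pointwise in
theorem myNormalBiSup {G : Type*} [Group G] (s : Finset ℕ) (f : ℕ → Subgroup G)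
    (hf : ∀ p, (f p).Normal) : (⨆ p ∈ s, f p).Normal := by
  constructor
  intro x hx g
  have key : MulAut.conj g • (⨆ p ∈ s, f p) = ⨆ p ∈ s, f p := by
    rw [Subgroup.pointwise_smul_def]
    erw [Subgroup.map_iSup]
    refine iSup_congr fun p => ?_
    erw [Subgroup.map_iSup]
    refine iSup_congr fun hp => ?_
    have := Subgroup.Normal.conj_smul_eq_self g (f p) (h := hf p)
    rwa [Subgroup.pointwise_smul_def] at this
  rw [← key]
  exact ⟨x, hx, rfl⟩

section FiniteNilpotent

variable (Q : Type*) [Group Q]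

/-- A choice of Sylow subgroup for each prime. -/
noncomputable def mySyl (p : ℕ) : Subgroup Q :=
  if hp : p.Prime then (haveI := Fact.mk hp; ((Sylow.nonempty (p := p) (G := Q)).some : Subgroup Q))
  else ⊥

variable [Finite Q] [Group.IsNilpotent Q]

theorem mySyl_normal (p : ℕ) : (mySyl Q p).Normal := by
  unfold mySyl
  split_ifs with hp
  · haveI := Fact.mk hp
    have h4 := (isNilpotent_of_finite_tfae (G := Q)).out 0 3
    exact h4.mp inferInstance p (Fact.mk hp) _
  · infer_instance

theorem mySyl_card {p : ℕ} (hp : p.Prime) :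
    Nat.card (mySyl Q p) = p ^ (Nat.card Q).factorization p := by
  unfold mySyl
  rw [dif_pos hp]
  haveI := Fact.mk hp
  exact Sylow.card_eq_multiplicity _

end FiniteNilpotent

theorem myCardBiSupCoprime {G : Type*} [Group G] [Finite G] (s : Finset ℕ) (f : ℕ → Subgroup G)
    (hn : ∀ p, (f p).Normal) (m : ℕ) (hc : ∀ p ∈ s, Nat.Coprime (Nat.card (f p)) m) :
    Nat.Coprime (Nat.card (⨆ p ∈ s, f p : Subgroup G)) m := by
  classical
  induction s using Finset.induction_on with
  | empty => simp [Nat.coprime_one_left]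
  | @insert a s ha ih =>
    have hsup : (⨆ p ∈ insert a s, f p : Subgroup G) = f a ⊔ ⨆ p ∈ s, f p := by
      exact Finset.iSup_insert a s f
    rw [hsup]
    haveI : (⨆ p ∈ s, f p : Subgroup G).Normal := myNormalBiSup s f hn
    have hdvd := myCardSup (f a) (⨆ p ∈ s, f p)
    have hco : Nat.Coprime (Nat.card (f a) * Nat.card (⨆ p ∈ s, f p : Subgroup G)) m :=
      Nat.Coprime.mul (hc a (Finset.mem_insert_self a s))
        (ih fun p hp => hc p (Finset.mem_insert_of_mem hp))
    exact Nat.Coprime.coprime_dvd_left hdvd hco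

section Key

variable {Q : Type*} [Group Q] [Finite Q] [Group.IsNilpotent Q]

/-- The subgroup generated by the Sylow subgroups for primes not dividing `m`. -/
noncomputable def myT (Q : Type*) [Group Q] (m : ℕ) : Subgroup Q :=
  ⨆ p ∈ ((Nat.card Q).primeFactors.filter fun p => ¬ p ∣ m), mySyl Q p

theorem myT_normal (m : ℕ) : (myT Q m).Normal :=
  myNormalBiSup _ _ (mySyl_normal Q)

theorem myT_card_coprime (m : ℕ) (hm : m ≠ 0) : Nat.Coprime (Nat.card (myT Q m)) m := by
  refine myCardBiSupCoprime _ _ (mySyl_normal Q) m fun p hp => ?_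
  rw [Finset.mem_filter, Nat.mem_primeFactors] at hp
  obtain ⟨⟨hpp, -, -⟩, hpm⟩ := hp
  rw [mySyl_card Q hpp]
  exact Nat.Coprime.pow_left _ ((Nat.Prime.coprime_iff_not_dvd hpp).mpr hpm)

theorem myT_index_prime (m : ℕ) {q : ℕ} (hq : q.Prime) (hdvd : q ∣ (myT Q m).index) : q ∣ m := by
  by_contra hqm
  have hcard0 : Nat.card Q ≠ 0 := Nat.card_pos.ne'
  have hqQ : q ∣ Nat.card Q := hdvd.trans (Subgroup.index_dvd_card _)
  have hqf : q ∈ (Nat.card Q).primeFactors.filter fun p => ¬ p ∣ m := by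
    rw [Finset.mem_filter, Nat.mem_primeFactors]
    exact ⟨⟨hq, hqQ, hcard0⟩, hqm⟩
  have hle : mySyl Q q ≤ myT Q m := le_biSup _ hqf
  have h1 : Nat.card (mySyl Q q) ∣ Nat.card (myT Q m) := Subgroup.card_dvd_of_le hle
  rw [mySyl_card Q hq] at h1
  have h2 : Nat.card (myT Q m) * (myT Q m).index = Nat.card Q := Subgroup.card_mul_index _
  set v := (Nat.card Q).factorization q with hv
  have h3 : q ^ (v + 1) ∣ Nat.card Q := by
    rw [pow_succ, ← h2]
    exact mul_dvd_mul h1 hdvd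
  have h4 : v + 1 ≤ v := (Nat.Prime.pow_dvd_iff_le_factorization hq hcard0).mp h3
  omega

theorem myFiniteKey {m n : ℕ} (hmn : Nat.gcd m n = 1) (H : Subgroup Q) (hH : H.index = m * n) :
    ∃! K : Subgroup Q, H ≤ K ∧ K.index = m := by
  have hH0 : H.index ≠ 0 := Subgroup.index_ne_zero_of_finite
  have hm0 : m ≠ 0 := by rintro rfl; simp at hH; exact hH0 (hH ▸ rfl)
  have hn0 : n ≠ 0 := by rintro rfl; rw [mul_zero] at hH; exact hH0 hH
  set T := myT Q m with hT
  haveI : T.Normal := myT_normal m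
  set K₀ := H ⊔ T with hK₀
  -- index of K₀ equals m
  have hdmn : K₀.index ∣ m * n := hH ▸ Subgroup.index_dvd_of_le le_sup_left
  have hdT : K₀.index ∣ T.index := Subgroup.index_dvd_of_le le_sup_right
  have hd0 : K₀.index ≠ 0 := Subgroup.index_ne_zero_of_finite
  have hdn : Nat.Coprime K₀.index n := by
    rw [Nat.coprime_iff_gcd_eq_one]
    by_contra hne
    obtain ⟨q, hq, hqd⟩ := Nat.exists_prime_and_dvd hne
    have hq1 : q ∣ K₀.index := hqd.trans (Nat.gcd_dvd_left _ _)
    have hq2 : q ∣ n := hqd.trans (Nat.gcd_dvd_right _ _)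
    have hq3 : q ∣ m := myT_index_prime m hq (hq1.trans hdT)
    have : q ∣ 1 := hmn ▸ Nat.dvd_gcd hq3 hq2
    exact hq.one_lt.ne' (Nat.eq_one_of_dvd_one this)
  have hdm : K₀.index ∣ m := hdn.dvd_of_dvd_mul_right hdmn
  have hmd : m ∣ K₀.index := by
    have he : H.relIndex K₀ * K₀.index = m * n := hH ▸ Subgroup.relIndex_mul_index le_sup_left
    have heT : H.relIndex K₀ ∣ Nat.card T := myRelindexSup H T
    have hem : Nat.Coprime m (H.relIndex K₀) :=
      ((myT_card_coprime m hm0).coprime_dvd_left heT).symm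
    have : m ∣ H.relIndex K₀ * K₀.index := he ▸ Dvd.intro n rfl
    exact hem.dvd_of_dvd_mul_left this
  have hKm : K₀.index = m := Nat.dvd_antisymm hdm hmd
  refine ⟨K₀, ⟨le_sup_left, hKm⟩, ?_⟩
  rintro K ⟨hHK, hKi⟩
  -- T ≤ K
  have hTK : T ≤ K := by
    rw [hT]
    unfold myT
    refine iSup_le fun p => iSup_le fun hp => ?_
    rw [Finset.mem_filter, Nat.mem_primeFactors] at hp
    obtain ⟨⟨hpp, -, -⟩, hpm⟩ := hp
    haveI := mySyl_normal Q p
    refine myNormalLeOfCoprime ?_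
    rw [mySyl_card Q hpp, hKi]
    exact Nat.Coprime.pow_left _ ((Nat.Prime.coprime_iff_not_dvd hpp).mpr hpm)
  have hK₀K : K₀ ≤ K := sup_le hHK hTK
  exact (myEqOfLeIndex hK₀K (hKm.trans hKi.symm) (hKm ▸ hm0)).symm

end Key

theorem myKeyGamma {Γ : Type*} [Group Γ] [Group.IsNilpotent Γ] {m n : ℕ}
    (hmn : Nat.gcd m n = 1) (hmn0 : m * n ≠ 0) (H : Subgroup Γ) (hH : H.index = m * n) :
    ∃! K : Subgroup Γ, H ≤ K ∧ K.index = m := by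
  haveI : H.FiniteIndex := ⟨hH ▸ hmn0⟩
  set N := H.normalCore with hN
  haveI : N.FiniteIndex := H.finiteIndex_normalCore
  set φ := QuotientGroup.mk' N with hφ
  have hsurj : Function.Surjective φ := QuotientGroup.mk'_surjective N
  have hker : φ.ker = N := QuotientGroup.ker_mk' N
  have hNH : N ≤ H := Subgroup.normalCore_le H
  have hkerH : φ.ker ≤ H := hker.symm ▸ hNH
  have hmapH : (H.map φ).index = m * n := (Subgroup.index_map_eq H hsurj hkerH).trans hH
  obtain ⟨K', ⟨hK'le, hK'i⟩, hK'uniq⟩ := myFiniteKey hmn (H.map φ) hmapH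
  have hcomapH : (H.map φ).comap φ = H := by
    rw [Subgroup.comap_map_eq, hker, sup_of_le_left hNH]
  refine ⟨K'.comap φ, ⟨?_, ?_⟩, ?_⟩
  · exact le_trans (le_of_eq hcomapH.symm) (Subgroup.comap_mono hK'le)
  · exact (Subgroup.index_comap_of_surjective K' hsurj).trans hK'i
  · rintro K ⟨hHK, hKi⟩
    have hkerK : φ.ker ≤ K := hkerH.trans hHK
    have hmapK : (K.map φ).index = m := (Subgroup.index_map_eq K hsurj hkerK).trans hKi
    have hHmapK : H.map φ ≤ K.map φ := Subgroup.map_mono hHK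
    have := hK'uniq (K.map φ) ⟨hHmapK, hmapK⟩
    rw [← this, Subgroup.comap_map_eq, hker, sup_of_le_left (hker ▸ hkerK)]

/-- The number of subgroups of index `n` in a group `G`. -/
noncomputable def subgroupCount (G : Type*) [Group G] (n : ℕ) : ℕ :=
  Nat.card {H : Subgroup G // H.index = n}

/-- A monoid is torsion-free if no nontrivial elements have finite order
(the definition `Monoid.IsTorsionFree` of the older Mathlib, since removed). -/
def Monoid.IsTorsionFree (G : Type*) [Monoid G] : Prop :=
  ∀ g : G, g ≠ 1 → ¬IsOfFinOrder g

theorem mySubgroupCountOne (G : Type*) [Group G] : subgroupCount G 1 = 1 := by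
  haveI : Unique {H : Subgroup G // H.index = 1} :=
    { default := ⟨⊤, Subgroup.index_top⟩,
      uniq := fun x => Subtype.ext (Subgroup.index_eq_one.mp x.2) }
  exact Nat.card_unique

/-- **Multiplicativity of the subgroup counting function of a 𝒯-group.**
If `Γ` is a finitely generated torsion-free nilpotent group and `m, n` are coprime natural
numbers, then `a_{mn}(Γ) = a_m(Γ) · a_n(Γ)`. -/
theorem subgroupCount_multiplicative_of_T_group
    (Γ : Type*) [Group Γ] [Group.FG Γ] [Group.IsNilpotent Γ]
    (hTF : Monoid.IsTorsionFree Γ)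
    (m n : ℕ) (h : Nat.gcd m n = 1) :
    subgroupCount Γ (m * n) = subgroupCount Γ m * subgroupCount Γ n := by
  rcases eq_or_ne n 1 with rfl | hn1
  · rw [mul_one, mySubgroupCountOne, mul_one]
  rcases eq_or_ne m 1 with rfl | hm1
  · rw [one_mul, mySubgroupCountOne, one_mul]
  have hm0 : m ≠ 0 := fun hm => hn1 (by simpa [hm] using h)
  have hn0 : n ≠ 0 := fun hn => hm1 (by simpa [hn] using h)
  have hmn0 : m * n ≠ 0 := mul_ne_zero hm0 hn0
  have hmn : Nat.Coprime m n := h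
  have hnm : Nat.gcd n m = 1 := Nat.coprime_comm.mp hmn
  have hnm0 : n * m ≠ 0 := mul_ne_zero hn0 hm0
  have key : ∀ K L : Subgroup Γ, K.index = m → L.index = n → (K ⊓ L).index = m * n := by
    intro K L hK hL
    haveI : K.FiniteIndex := ⟨hK ▸ hm0⟩
    haveI : L.FiniteIndex := ⟨hL ▸ hn0⟩
    have h1 : m * n ∣ (K ⊓ L).index :=
      Nat.Coprime.mul_dvd_of_dvd_of_dvd hmn
        (hK ▸ Subgroup.index_dvd_of_le inf_le_left)
        (hL ▸ Subgroup.index_dvd_of_le inf_le_right)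
    have h2 : (K ⊓ L).index ≤ m * n := by
      have := Subgroup.index_inf_le (H := K) (K := L)
      rwa [hK, hL] at this
    have h3 : (K ⊓ L).index ≠ 0 := Subgroup.FiniteIndex.index_ne_zero
    exact le_antisymm h2 (Nat.le_of_dvd (Nat.pos_of_ne_zero h3) h1)
  set f : {K : Subgroup Γ // K.index = m} × {L : Subgroup Γ // L.index = n} →
      {H : Subgroup Γ // H.index = m * n} :=
    fun P => ⟨P.1.1 ⊓ P.2.1, key P.1.1 P.2.1 P.1.2 P.2.2⟩ with hf
  have hbij : Function.Bijective f := by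
    constructor
    · rintro ⟨⟨K, hK⟩, ⟨L, hL⟩⟩ ⟨⟨K', hK'⟩, ⟨L', hL'⟩⟩ hEq
      have hEq' : K ⊓ L = K' ⊓ L' := congrArg Subtype.val hEq
      have hS : (K ⊓ L).index = m * n := key K L hK hL
      obtain ⟨Km, -, hKuniq⟩ := myKeyGamma hmn hmn0 (K ⊓ L) hS
      obtain ⟨Ln, -, hLuniq⟩ := myKeyGamma hnm hnm0 (K ⊓ L)
        (hS.trans (mul_comm m n))
      have e1 : K = Km := hKuniq K ⟨inf_le_left, hK⟩
      have e2 : K' = Km := hKuniq K' ⟨hEq' ▸ inf_le_left, hK'⟩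
      have e3 : L = Ln := hLuniq L ⟨inf_le_right, hL⟩
      have e4 : L' = Ln := hLuniq L' ⟨hEq' ▸ inf_le_right, hL'⟩
      simp only [Prod.mk.injEq, Subtype.mk.injEq]
      exact ⟨e1.trans e2.symm, e3.trans e4.symm⟩
    · rintro ⟨H, hH⟩
      obtain ⟨K, ⟨hHK, hKm⟩, -⟩ := myKeyGamma hmn hmn0 H hH
      obtain ⟨L, ⟨hHL, hLn⟩, -⟩ := myKeyGamma hnm hnm0 H (hH.trans (mul_comm m n))
      refine ⟨⟨⟨K, hKm⟩, ⟨L, hLn⟩⟩, ?_⟩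
      have hinf : H = K ⊓ L :=
        myEqOfLeIndex (le_inf hHK hHL) (hH.trans (key K L hKm hLn).symm) (hH ▸ hmn0)
      exact Subtype.ext hinf.symm
  show Nat.card _ = Nat.card _ * Nat.card _
  rw [← Nat.card_prod]
  exact (Nat.card_eq_of_bijective f hbij).symm
end

section
/- For every prime p, the local subgroup zeta function of the integral Heisenberg group H(ℤ) satisfies, as an identity of formal power series in ℚ[[Y]]: (∑_{i≥0} a_{p^i}(H(ℤ))·Y^i)·(1−Y)(1−pY)(1−p²Y²)(1−p³Y²) = 1 − p³Y³. Equivalently, ζ_{H(ℤ)}(s) = ζ(s)ζ(s−1)ζ(2s−2)ζ(2s−3)ζ(3s−3)^{−1} factor by factor at each prime. -/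
/-- The Heisenberg group over a commutative ring `R`: the group of upper unitriangular
`3 × 3` matrices `![![1, x, z], ![0, 1, y], ![0, 0, 1]]` with entries in `R`,
encoded by the entry triple `(x, y, z)` with the matrix multiplication law. -/
@[ext]
structure Heisenberg (R : Type*) [CommRing R] where
  x : R
  y : R
  z : R

namespace Heisenberg

variable {R : Type*} [CommRing R]

instance : Mul (Heisenberg R) :=
  ⟨fun a b => ⟨a.x + b.x, a.y + b.y, a.z + b.z + a.x * b.y⟩⟩

instance : One (Heisenberg R) := ⟨⟨0, 0, 0⟩⟩

instance : Inv (Heisenberg R) :=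
  ⟨fun a => ⟨-a.x, -a.y, a.x * a.y - a.z⟩⟩

lemma mul_def (a b : Heisenberg R) :
    a * b = ⟨a.x + b.x, a.y + b.y, a.z + b.z + a.x * b.y⟩ := rfl

lemma one_def : (1 : Heisenberg R) = ⟨0, 0, 0⟩ := rfl

lemma inv_def (a : Heisenberg R) : a⁻¹ = ⟨-a.x, -a.y, a.x * a.y - a.z⟩ := rfl

instance : Group (Heisenberg R) where
  mul_assoc a b c := by
    simp only [mul_def, mk.injEq]
    refine ⟨by ring, by ring, by ring⟩
  one_mul a := by ext <;> simp [mul_def, one_def]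
  mul_one a := by ext <;> simp [mul_def, one_def]
  inv_mul_cancel a := by
    simp only [mul_def, inv_def, one_def, mk.injEq]
    refine ⟨by ring, by ring, by ring⟩


@[simp] lemma mul_x (a b : Heisenberg R) : (a * b).x = a.x + b.x := rfl
@[simp] lemma mul_y (a b : Heisenberg R) : (a * b).y = a.y + b.y := rfl
@[simp] lemma mul_z (a b : Heisenberg R) : (a * b).z = a.z + b.z + a.x * b.y := rfl
@[simp] lemma one_x : (1 : Heisenberg R).x = 0 := rfl
@[simp] lemma one_y : (1 : Heisenberg R).y = 0 := rfl
@[simp] lemma one_z : (1 : Heisenberg R).z = 0 := rfl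
@[simp] lemma inv_x (a : Heisenberg R) : a⁻¹.x = -a.x := rfl
@[simp] lemma inv_y (a : Heisenberg R) : a⁻¹.y = -a.y := rfl
@[simp] lemma inv_z (a : Heisenberg R) : a⁻¹.z = a.x * a.y - a.z := rfl

/-- The coordinates of an integer power of `⟨A, S, U⟩`. -/
lemma zpow_spec (A S U : R) (i : ℤ) :
    ((⟨A, S, U⟩ : Heisenberg R) ^ i).x = i * A ∧
    ((⟨A, S, U⟩ : Heisenberg R) ^ i).y = i * S ∧
    2 * ((⟨A, S, U⟩ : Heisenberg R) ^ i).z = 2 * i * U + A * S * (i * (i - 1)) := by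
  induction i using Int.induction_on with
  | zero => simp
  | succ n ih =>
    obtain ⟨h1, h2, h3⟩ := ih
    rw [zpow_add_one]
    simp only [mul_x, mul_y, mul_z]
    push_cast at h1 h2 h3 ⊢
    refine ⟨by linear_combination h1, by linear_combination h2, by linear_combination h3 + 2 * S * h1⟩
  | pred n ih =>
    obtain ⟨h1, h2, h3⟩ := ih
    rw [zpow_sub_one]
    simp only [mul_x, mul_y, mul_z, inv_x, inv_y, inv_z]
    push_cast at h1 h2 h3 ⊢
    refine ⟨by linear_combination h1, by linear_combination h2, by linear_combination h3 - 2 * S * h1⟩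

lemma zpow_central (M : R) (k : ℤ) :
    ((⟨0, 0, M⟩ : Heisenberg R) ^ k) = ⟨0, 0, k * M⟩ := by
  induction k using Int.induction_on with
  | zero => simp [one_def]
  | succ n ih =>
    rw [zpow_add_one, ih, mul_def]
    ext <;> push_cast <;> simp <;> ring
  | pred n ih =>
    rw [zpow_sub_one, ih, inv_def, mul_def]
    ext <;> push_cast <;> simp <;> ring

/-- Auxiliary quantity: twice the `z`-coordinate of `g1^i * g2^j` where
`g1 = ⟨a,s,u⟩`, `g2 = ⟨0,d,v⟩`. -/
def W (a s d u v i j : ℤ) : ℤ := 2 * i * u + 2 * j * v + a * s * (i * (i - 1)) + 2 * i * a * j * d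

/-- The subgroup of the integral Heisenberg group generated by
`⟨a,s,u⟩`, `⟨0,d,v⟩`, `⟨0,0,m⟩`. -/
def Hgen (a s d m u v : ℤ) : Subgroup (Heisenberg ℤ) :=
  Subgroup.closure {(⟨a, s, u⟩ : Heisenberg ℤ), ⟨0, d, v⟩, ⟨0, 0, m⟩}

lemma g1_mem (a s d m u v : ℤ) : (⟨a, s, u⟩ : Heisenberg ℤ) ∈ Hgen a s d m u v :=
  Subgroup.subset_closure (by simp)

lemma g2_mem (a s d m u v : ℤ) : (⟨0, d, v⟩ : Heisenberg ℤ) ∈ Hgen a s d m u v :=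
  Subgroup.subset_closure (by simp)

lemma g3_mem (a s d m u v : ℤ) : (⟨0, 0, m⟩ : Heisenberg ℤ) ∈ Hgen a s d m u v :=
  Subgroup.subset_closure (by simp)

lemma even_sub_W (a s d u v i j : ℤ) : ∃ w : ℤ, W a s d u v i j = 2 * w := by
  have h : 2 ∣ i * (i - 1) := by
    rcases Int.even_or_odd i with he | ho
    · exact Dvd.dvd.mul_right he.two_dvd _
    · obtain ⟨t, rfl⟩ := ho
      exact Dvd.dvd.mul_left ⟨t, by ring⟩ _
  obtain ⟨w, hw⟩ := h
  exact ⟨i * u + j * v + a * s * w + i * a * j * d, by rw [W, hw]; ring⟩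

/-- `g1^i * g2^j * g3^k`, computed explicitly. -/
lemma triple_prod (a s d m u v i j k : ℤ) :
    ∃ g : Heisenberg ℤ, g = (⟨a, s, u⟩ : Heisenberg ℤ) ^ i * (⟨0, d, v⟩ : Heisenberg ℤ) ^ j *
        (⟨0, 0, m⟩ : Heisenberg ℤ) ^ k ∧
      g.x = i * a ∧ g.y = i * s + j * d ∧ 2 * g.z = W a s d u v i j + 2 * k * m := by
  obtain ⟨hx1, hy1, hz1⟩ := zpow_spec a s u i
  obtain ⟨hx2, hy2, hz2⟩ := zpow_spec 0 d v j
  simp only [Int.cast_id] at hx1 hy1 hz1 hx2 hy2 hz2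
  refine ⟨_, rfl, ?_, ?_, ?_⟩
  · simp only [mul_x, zpow_central, Int.cast_id, hx1, hx2]; ring
  · simp only [mul_y, zpow_central, Int.cast_id, hy1, hy2]; ring
  · simp only [mul_z, mul_x, mul_y, zpow_central, Int.cast_id, W]
    rw [mul_add, mul_add, mul_add, mul_add, hz1, hz2, hx1, hy2]
    ring

/-- Membership characterization for `Hgen`, assuming `m ∣ a * d`. -/
lemma mem_Hgen {a s d m u v : ℤ} (hm : m ∣ a * d) (g : Heisenberg ℤ) :
    g ∈ Hgen a s d m u v ↔
      ∃ i j : ℤ, g.x = i * a ∧ g.y = i * s + j * d ∧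
        (2 * m) ∣ (2 * g.z - W a s d u v i j) := by
  constructor
  · intro hg
    -- the set of elements satisfying the predicate is a subgroup containing the generators
    let K : Subgroup (Heisenberg ℤ) :=
      { carrier := {g | ∃ i j : ℤ, g.x = i * a ∧ g.y = i * s + j * d ∧
          (2 * m) ∣ (2 * g.z - W a s d u v i j)}
        one_mem' := ⟨0, 0, by simp [W]⟩
        mul_mem' := by
          rintro g g' ⟨i, j, hx, hy, hz⟩ ⟨i', j', hx', hy', hz'⟩
          refine ⟨i + i', j + j', by simp only [mul_x, hx, hx']; ring, by simp only [mul_y, hy, hy']; ring, ?_⟩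
          have key : 2 * (g * g').z - W a s d u v (i + i') (j + j') =
              (2 * g.z - W a s d u v i j) + (2 * g'.z - W a s d u v i' j')
                - 2 * (a * d) * (i' * j) := by
            simp only [mul_z, W]
            rw [hx, hy']
            ring
          rw [key]
          obtain ⟨c, hc⟩ := hm
          exact dvd_sub (dvd_add hz hz') ⟨c * (i' * j), by rw [hc]; ring⟩
        inv_mem' := by
          rintro g ⟨i, j, hx, hy, hz⟩
          refine ⟨-i, -j, by simp only [inv_x, hx]; ring, by simp only [inv_y, hy]; ring, ?_⟩
          have key : 2 * (g⁻¹).z - W a s d u v (-i) (-j) =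
              -(2 * g.z - W a s d u v i j) - 2 * (a * d) * (i * j) := by
            simp only [inv_z, W]
            rw [hx, hy]
            ring
          rw [key]
          obtain ⟨c, hc⟩ := hm
          exact dvd_sub (dvd_neg.mpr hz) ⟨c * (i * j), by rw [hc]; ring⟩ }
    have hK : Hgen a s d m u v ≤ K := by
      rw [Hgen, Subgroup.closure_le]
      rintro g (rfl | rfl | rfl)
      · exact ⟨1, 0, by ring, by ring, by simp [W]⟩
      · exact ⟨0, 1, by ring, by ring, by simp [W]⟩
      · exact ⟨0, 0, by ring, by ring, by simp [W]⟩
    exact hK hg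
  · rintro ⟨i, j, hx, hy, hz⟩
    obtain ⟨k, hk⟩ := hz
    obtain ⟨g', hg', hx', hy', hz'⟩ := triple_prod a s d m u v i j k
    have : g = g' := by
      ext
      · rw [hx, hx']
      · rw [hy, hy']
      · have h2z : 2 * g.z = 2 * g'.z := by rw [hz']; linear_combination hk
        omega
    rw [this, hg']
    exact Subgroup.mul_mem _ (Subgroup.mul_mem _ (Subgroup.zpow_mem _ (g1_mem a s d m u v) i)
      (Subgroup.zpow_mem _ (g2_mem a s d m u v) j)) (Subgroup.zpow_mem _ (g3_mem a s d m u v) k)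


/-- Reduced representatives: coordinates in the boxes `[0,a) × [0,d) × [0,m)`. -/
def Reduced (a d m : ℤ) (r : Heisenberg ℤ) : Prop :=
  0 ≤ r.x ∧ r.x < a ∧ 0 ≤ r.y ∧ r.y < d ∧ 0 ≤ r.z ∧ r.z < m

lemma reduced_unique {a s d m u v : ℤ} (ha : 0 < a) (hd : 0 < d) (hm0 : 0 < m)
    (hm : m ∣ a * d) {r r' : Heisenberg ℤ} (hb : Reduced a d m r) (hb' : Reduced a d m r')
    (hmem : r⁻¹ * r' ∈ Hgen a s d m u v) : r = r' := by
  obtain ⟨hx0, hxa, hy0, hyd, hz0, hzm⟩ := hb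
  obtain ⟨hx0', hxa', hy0', hyd', hz0', hzm'⟩ := hb'
  rw [mem_Hgen hm] at hmem
  obtain ⟨i, j, hx, hy, hz⟩ := hmem
  simp only [mul_x, mul_y, mul_z, inv_x, inv_y, inv_z] at hx hy hz
  have hxe : r.x = r'.x := by
    have hdvd : a ∣ (r'.x - r.x) := ⟨i, by linarith⟩
    have h0 : r'.x - r.x = 0 := Int.eq_zero_of_abs_lt_dvd hdvd (by rw [abs_lt]; omega)
    omega
  have hi : i = 0 := by
    have : i * a = 0 := by omega
    exact (mul_eq_zero.mp this).resolve_right (by omega)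
  have hye : r.y = r'.y := by
    have hdvd : d ∣ (r'.y - r.y) := ⟨j, by rw [hi] at hy; linarith⟩
    have h0 : r'.y - r.y = 0 := Int.eq_zero_of_abs_lt_dvd hdvd (by rw [abs_lt]; omega)
    omega
  have hze : r.z = r'.z := by
    have hW : W a s d u v i j = 0 := by
      have hj : j = 0 := by
        have : j * d = 0 := by rw [hi] at hy; omega
        exact (mul_eq_zero.mp this).resolve_right (by omega)
      simp [W, hi, hj]
    rw [hW, sub_zero] at hz
    have h2 : (2 * m) ∣ 2 * (r'.z - r.z) := by
      have he : 2 * (r.x * r.y - r.z + r'.z + -r.x * r'.y) = 2 * (r'.z - r.z) := by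
        rw [hye]; ring
      rwa [he] at hz
    have hdvd : m ∣ r'.z - r.z := (mul_dvd_mul_iff_left (by norm_num : (2:ℤ) ≠ 0)).mp h2
    have h0 : r'.z - r.z = 0 := Int.eq_zero_of_abs_lt_dvd hdvd (by rw [abs_lt]; omega)
    omega
  ext <;> assumption

/-- Explicit element of `Hgen` with parameters `(i, j, k)`. -/
def hElt (a s d m u v i j k : ℤ) : Heisenberg ℤ :=
  ⟨i * a, i * s + j * d, W a s d u v i j / 2 + k * m⟩

lemma hElt_mem {a s d m u v : ℤ} (hm : m ∣ a * d) (i j k : ℤ) :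
    hElt a s d m u v i j k ∈ Hgen a s d m u v := by
  rw [mem_Hgen hm]
  obtain ⟨w, hw⟩ := even_sub_W a s d u v i j
  refine ⟨i, j, rfl, rfl, ⟨k, ?_⟩⟩
  show 2 * (W a s d u v i j / 2 + k * m) - _ = _
  rw [hw, Int.mul_ediv_cancel_left _ (by norm_num : (2:ℤ) ≠ 0)]
  ring

/-- Every left coset contains a reduced representative. -/
lemma exists_reduced {a s d m u v : ℤ} (ha : 0 < a) (hd : 0 < d) (hm0 : 0 < m)
    (hm : m ∣ a * d) (g : Heisenberg ℤ) :
    ∃ r : Heisenberg ℤ, Reduced a d m r ∧ g⁻¹ * r ∈ Hgen a s d m u v := by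
  set i := -(g.x / a) with hi
  set j := -((g.y + i * s) / d) with hj
  set Z := g.z + W a s d u v i j / 2 + g.x * (i * s + j * d) with hZ
  set k := -(Z / m) with hk
  have hxval : (g * hElt a s d m u v i j k).x = g.x % a := by
    simp only [mul_x, hElt]
    rw [Int.emod_def, hi]
    ring
  have hyval : (g * hElt a s d m u v i j k).y = (g.y + i * s) % d := by
    simp only [mul_y, hElt]
    rw [Int.emod_def, hj]
    ring
  have hzval : (g * hElt a s d m u v i j k).z = Z % m := by
    simp only [mul_z, hElt]
    rw [Int.emod_def, hk, hZ]
    ring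
  refine ⟨g * hElt a s d m u v i j k, ⟨?_, ?_, ?_, ?_, ?_, ?_⟩, ?_⟩
  · rw [hxval]; exact Int.emod_nonneg _ (by omega)
  · rw [hxval]; exact Int.emod_lt_of_pos _ ha
  · rw [hyval]; exact Int.emod_nonneg _ (by omega)
  · rw [hyval]; exact Int.emod_lt_of_pos _ hd
  · rw [hzval]; exact Int.emod_nonneg _ (by omega)
  · rw [hzval]; exact Int.emod_lt_of_pos _ hm0
  · rw [inv_mul_cancel_left]
    exact hElt_mem hm i j k

lemma index_Hgen {a s d m u v : ℤ} (ha : 0 < a) (hd : 0 < d) (hm0 : 0 < m)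
    (hm : m ∣ a * d) : (Hgen a s d m u v).index = (a * d * m).toNat := by
  have hcard : Nat.card {r : Heisenberg ℤ // Reduced a d m r}
      = Nat.card (Heisenberg ℤ ⧸ Hgen a s d m u v) := by
    apply Nat.card_eq_of_bijective (fun r => (QuotientGroup.mk r.1 : Heisenberg ℤ ⧸ Hgen a s d m u v))
    constructor
    · rintro ⟨r, hr⟩ ⟨r', hr'⟩ h
      exact Subtype.ext (reduced_unique ha hd hm0 hm hr hr' (QuotientGroup.eq.mp h))
    · intro q
      obtain ⟨g, rfl⟩ := QuotientGroup.mk_surjective q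
      obtain ⟨r, hr, hmem⟩ := exists_reduced ha hd hm0 hm g
      exact ⟨⟨r, hr⟩, (QuotientGroup.eq.mpr hmem).symm⟩
  have e : {r : Heisenberg ℤ // Reduced a d m r} ≃ (Fin a.toNat × Fin d.toNat × Fin m.toNat) :=
    { toFun := fun r => (⟨r.1.x.toNat, by obtain ⟨h1,h2,h3,h4,h5,h6⟩ := r.2; omega⟩,
        ⟨r.1.y.toNat, by obtain ⟨h1,h2,h3,h4,h5,h6⟩ := r.2; omega⟩,
        ⟨r.1.z.toNat, by obtain ⟨h1,h2,h3,h4,h5,h6⟩ := r.2; omega⟩)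
      invFun := fun t => ⟨⟨((t.1 : ℕ) : ℤ), ((t.2.1 : ℕ) : ℤ), ((t.2.2 : ℕ) : ℤ)⟩, by
        have h1 := t.1.isLt
        have h2 := t.2.1.isLt
        have h3 := t.2.2.isLt
        refine ⟨?_, ?_, ?_, ?_, ?_, ?_⟩ <;> dsimp only <;> omega⟩
      left_inv := fun r => Subtype.ext (by
        obtain ⟨h1,h2,h3,h4,h5,h6⟩ := r.2
        ext <;> simp <;> omega)
      right_inv := fun t => by
        rcases t with ⟨⟨x,hx⟩,⟨y,hy⟩,⟨z,hz⟩⟩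
        simp }
  have htn : ∀ x y : ℤ, 0 ≤ x → 0 ≤ y → (x * y).toNat = x.toNat * y.toNat := by
    intro x y hx hy
    lift x to ℕ using hx
    lift y to ℕ using hy
    rw [← Nat.cast_mul, Int.toNat_natCast, Int.toNat_natCast, Int.toNat_natCast]
  have hRcard : Nat.card {r : Heisenberg ℤ // Reduced a d m r} = (a * d * m).toNat := by
    rw [Nat.card_congr e]
    simp only [Nat.card_eq_fintype_card, Fintype.card_prod, Fintype.card_fin]
    rw [htn _ _ (by positivity) hm0.le, htn _ _ ha.le hd.le]
    ring
  rw [Subgroup.index, ← hcard, hRcard]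

lemma zpow_xzero (D V : ℤ) (j : ℤ) :
    (⟨0, D, V⟩ : Heisenberg ℤ) ^ j = ⟨0, j * D, j * V⟩ := by
  obtain ⟨h1, h2, h3⟩ := zpow_spec (0 : ℤ) D V j
  simp only [Int.cast_id] at h1 h2 h3
  ext
  · simpa using h1
  · exact h2
  · have : (0:ℤ) * D * (j * (j-1)) = 0 := by ring
    rw [this, add_zero] at h3
    dsimp only
    linarith

lemma zpow_gen1 (A S U : ℤ) (i : ℤ) :
    ((⟨A, S, U⟩ : Heisenberg ℤ) ^ i).x = i * A ∧
    ((⟨A, S, U⟩ : Heisenberg ℤ) ^ i).y = i * S ∧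
    2 * ((⟨A, S, U⟩ : Heisenberg ℤ) ^ i).z = 2 * i * U + A * S * (i * (i - 1)) := by
  obtain ⟨h1, h2, h3⟩ := zpow_spec A S U i
  simp only [Int.cast_id] at h1 h2 h3
  exact ⟨h1, h2, h3⟩

lemma zpow_coords (g : Heisenberg ℤ) (i : ℤ) :
    (g ^ i).x = i * g.x ∧ (g ^ i).y = i * g.y ∧
    2 * (g ^ i).z = 2 * i * g.z + g.x * g.y * (i * (i - 1)) := by
  have h := zpow_gen1 g.x g.y g.z i
  rwa [show (⟨g.x, g.y, g.z⟩ : Heisenberg ℤ) = g from by ext <;> rfl] at h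

/-- Classification: every finite-index subgroup of the integral Heisenberg group is
an `Hgen` with canonical parameters. -/
lemma exists_params (H : Subgroup (Heisenberg ℤ)) (hH : H.index ≠ 0) :
    ∃ a s d m u v : ℤ, 0 < a ∧ 0 < d ∧ 0 < m ∧ m ∣ a * d ∧
      0 ≤ s ∧ s < d ∧ 0 ≤ u ∧ u < m ∧ 0 ≤ v ∧ v < m ∧ H = Hgen a s d m u v := by
  have hfin : Finite (Heisenberg ℤ ⧸ H) := (Nat.card_ne_zero.mp hH).2
  -- nontrivial elements in the three directions
  have hAex : ∃ t : ℤ, t ≠ 0 ∧ ∃ g ∈ H, g.x = t := by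
    obtain ⟨t, t', hne, he⟩ := Finite.exists_ne_map_eq_of_infinite
      (fun t : ℤ => ((⟨t, 0, 0⟩ : Heisenberg ℤ) : Heisenberg ℤ ⧸ H))
    refine ⟨t' - t, by omega, (⟨t, 0, 0⟩ : Heisenberg ℤ)⁻¹ * ⟨t', 0, 0⟩, QuotientGroup.eq.mp he, by simp; omega⟩
  have hDex : ∃ t : ℤ, t ≠ 0 ∧ ∃ g ∈ H, g.x = 0 ∧ g.y = t := by
    obtain ⟨t, t', hne, he⟩ := Finite.exists_ne_map_eq_of_infinite
      (fun t : ℤ => ((⟨0, t, 0⟩ : Heisenberg ℤ) : Heisenberg ℤ ⧸ H))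
    refine ⟨t' - t, by omega, (⟨0, t, 0⟩ : Heisenberg ℤ)⁻¹ * ⟨0, t', 0⟩,
      QuotientGroup.eq.mp he, by simp, by simp; omega⟩
  have hMex : ∃ t : ℤ, t ≠ 0 ∧ (⟨0, 0, t⟩ : Heisenberg ℤ) ∈ H := by
    obtain ⟨t, t', hne, he⟩ := Finite.exists_ne_map_eq_of_infinite
      (fun t : ℤ => ((⟨0, 0, t⟩ : Heisenberg ℤ) : Heisenberg ℤ ⧸ H))
    have hmem := QuotientGroup.eq.mp he
    have : (⟨0, 0, t⟩ : Heisenberg ℤ)⁻¹ * ⟨0, 0, t'⟩ = (⟨0, 0, t' - t⟩ : Heisenberg ℤ) := by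
      ext <;> simp <;> ring
    rw [this] at hmem
    exact ⟨t' - t, by omega, hmem⟩
  -- the three subgroups of ℤ
  let A : AddSubgroup ℤ :=
    { carrier := {t | ∃ g ∈ H, g.x = t}
      zero_mem' := ⟨1, H.one_mem, rfl⟩
      add_mem' := by rintro t t' ⟨g, hg, rfl⟩ ⟨g', hg', rfl⟩; exact ⟨g * g', H.mul_mem hg hg', rfl⟩
      neg_mem' := by rintro t ⟨g, hg, rfl⟩; exact ⟨g⁻¹, H.inv_mem hg, rfl⟩ }
  let D : AddSubgroup ℤ :=
    { carrier := {t | ∃ g ∈ H, g.x = 0 ∧ g.y = t}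
      zero_mem' := ⟨1, H.one_mem, rfl, rfl⟩
      add_mem' := by
        rintro t t' ⟨g, hg, hgx, rfl⟩ ⟨g', hg', hgx', rfl⟩
        exact ⟨g * g', H.mul_mem hg hg', by simp [hgx, hgx'], rfl⟩
      neg_mem' := by rintro t ⟨g, hg, hgx, rfl⟩; exact ⟨g⁻¹, H.inv_mem hg, by simp [hgx], rfl⟩ }
  let M : AddSubgroup ℤ :=
    { carrier := {t | (⟨0, 0, t⟩ : Heisenberg ℤ) ∈ H}
      zero_mem' := by show (⟨0,0,0⟩ : Heisenberg ℤ) ∈ H; rw [← one_def]; exact H.one_mem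
      add_mem' := by
        intro t t' ht ht'
        show (⟨0, 0, t + t'⟩ : Heisenberg ℤ) ∈ H
        have h : (⟨0, 0, t + t'⟩ : Heisenberg ℤ) = ⟨0, 0, t⟩ * ⟨0, 0, t'⟩ := by
          ext <;> simp
        rw [h]; exact H.mul_mem ht ht'
      neg_mem' := by
        intro t ht
        show (⟨0, 0, -t⟩ : Heisenberg ℤ) ∈ H
        have h : (⟨0, 0, -t⟩ : Heisenberg ℤ) = (⟨0, 0, t⟩ : Heisenberg ℤ)⁻¹ := by
          ext <;> simp
        rw [h]; exact H.inv_mem ht }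
  -- generators of the cyclic subgroups
  have getgen : ∀ (B : AddSubgroup ℤ), (∃ t : ℤ, t ≠ 0 ∧ t ∈ B) →
      ∃ b : ℤ, 0 < b ∧ ∀ t : ℤ, t ∈ B ↔ b ∣ t := by
    intro B ⟨t0, ht0, ht0B⟩
    obtain ⟨b0, hb0⟩ := Int.subgroup_cyclic B
    have hmem : ∀ t : ℤ, t ∈ B ↔ b0 ∣ t := by
      intro t
      rw [hb0, AddSubgroup.mem_closure_singleton]
      constructor
      · rintro ⟨n, hn⟩; exact ⟨n, by rw [← hn]; simp [mul_comm]⟩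
      · rintro ⟨n, hn⟩; exact ⟨n, by rw [hn]; simp [mul_comm]⟩
    have hb0ne : b0 ≠ 0 := by
      rintro rfl
      obtain ⟨n, hn⟩ := (hmem t0).mp ht0B
      simp at hn
      exact ht0 hn
    refine ⟨|b0|, abs_pos.mpr hb0ne, fun t => ?_⟩
    rw [hmem t, abs_dvd]
  obtain ⟨a, ha, hAmem⟩ := getgen A hAex
  obtain ⟨d, hd, hDmem⟩ := getgen D (by obtain ⟨t, ht, g, hg, h1, h2⟩ := hDex; exact ⟨t, ht, g, hg, h1, h2⟩)
  obtain ⟨m, hm0, hMmem⟩ := getgen M (by obtain ⟨t, ht, hg⟩ := hMex; exact ⟨t, ht, hg⟩)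
  obtain ⟨gA, hgAH, hgAx⟩ := (hAmem a).mpr dvd_rfl
  obtain ⟨gD, hgDH, hgDx, hgDy⟩ := (hDmem d).mpr dvd_rfl
  have hg3H : (⟨0, 0, m⟩ : Heisenberg ℤ) ∈ H := (hMmem m).mpr dvd_rfl
  have hgAeta : gA = (⟨a, gA.y, gA.z⟩ : Heisenberg ℤ) := by ext <;> simp [hgAx]
  have hgDeta : gD = (⟨0, d, gD.z⟩ : Heisenberg ℤ) := by ext <;> simp [hgDx, hgDy]
  -- m divides a*d via the commutator
  have hm : m ∣ a * d := by
    apply (hMmem (a * d)).mp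
    show (⟨0, 0, a * d⟩ : Heisenberg ℤ) ∈ H
    have hc : (⟨0, 0, a * d⟩ : Heisenberg ℤ) = gA * gD * gA⁻¹ * gD⁻¹ := by
      rw [hgAeta, hgDeta]
      ext <;> simp <;> ring
    rw [hc]
    exact H.mul_mem (H.mul_mem (H.mul_mem hgAH hgDH) (H.inv_mem hgAH)) (H.inv_mem hgDH)
  -- H equals Hgen with the raw parameters
  have hstep1 : H = Hgen a gA.y d m gA.z gD.z := by
    apply le_antisymm
    · intro g hg
      obtain ⟨i, hi⟩ : a ∣ g.x := (hAmem g.x).mp ⟨g, hg, rfl⟩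
      obtain ⟨pA1, pA2, pA3⟩ := zpow_coords gA (-i)
      have hc1H : g * gA ^ (-i) ∈ H := H.mul_mem hg (Subgroup.zpow_mem H hgAH _)
      have hc1x : (g * gA ^ (-i)).x = 0 := by
        simp only [mul_x, pA1, hgAx]
        linear_combination hi
      obtain ⟨j, hj⟩ : d ∣ (g * gA ^ (-i)).y := (hDmem _).mp ⟨_, hc1H, hc1x, rfl⟩
      obtain ⟨pD1, pD2, pD3⟩ := zpow_coords gD (-j)
      have hc2H : g * gA ^ (-i) * gD ^ (-j) ∈ H := H.mul_mem hc1H (Subgroup.zpow_mem H hgDH _)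
      have hc2x : (g * gA ^ (-i) * gD ^ (-j)).x = 0 := by
        simp only [mul_x, pD1, hgDx, hc1x]
        ring
      have hj' : g.y + (gA ^ (-i)).y = d * j := by simpa only [mul_y] using hj
      have hc2y : (g * gA ^ (-i) * gD ^ (-j)).y = 0 := by
        simp only [mul_y, pD2, hgDy]
        linear_combination hj' 
      have hc2eta : g * gA ^ (-i) * gD ^ (-j)
          = (⟨0, 0, (g * gA ^ (-i) * gD ^ (-j)).z⟩ : Heisenberg ℤ) := by
        ext
        · exact hc2x
        · exact hc2y
        · rfl
      obtain ⟨w, hw⟩ : m ∣ (g * gA ^ (-i) * gD ^ (-j)).z := by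
        apply (hMmem _).mp
        show (⟨0, 0, (g * gA ^ (-i) * gD ^ (-j)).z⟩ : Heisenberg ℤ) ∈ H
        rw [← hc2eta]
        exact hc2H
      have hdecomp : g = (g * gA ^ (-i) * gD ^ (-j)) * gD ^ j * gA ^ i := by group
      rw [hdecomp, hc2eta]
      have hc2gen : (⟨0, 0, (g * gA ^ (-i) * gD ^ (-j)).z⟩ : Heisenberg ℤ)
          ∈ Hgen a gA.y d m gA.z gD.z := by
        have h : (⟨0, 0, (g * gA ^ (-i) * gD ^ (-j)).z⟩ : Heisenberg ℤ)
            = (⟨0, 0, m⟩ : Heisenberg ℤ) ^ w := by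
          rw [zpow_xzero, hw]
          ext <;> dsimp only <;> ring
        rw [h]
        exact Subgroup.zpow_mem _ (g3_mem a gA.y d m gA.z gD.z) w
      refine Subgroup.mul_mem _ (Subgroup.mul_mem _ hc2gen ?_) ?_
      · exact Subgroup.zpow_mem _ (by rw [hgDeta]; exact g2_mem a gA.y d m gA.z gD.z) j
      · exact Subgroup.zpow_mem _ (by rw [hgAeta]; exact g1_mem a gA.y d m gA.z gD.z) i
    · rw [Hgen, Subgroup.closure_le]
      rintro g (rfl | rfl | rfl)
      · rw [← hgAeta]; exact hgAH
      · rw [← hgDeta]; exact hgDH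
      · exact hg3H
  -- normalize the parameters
  set j0 : ℤ := -(gA.y / d) with hj0
  set z1 : ℤ := gA.z + j0 * gD.z + a * (j0 * d) with hz1
  set k0 : ℤ := -(z1 / m) with hk0
  set k1 : ℤ := -(gD.z / m) with hk1
  have P1 : (⟨a, gA.y, gA.z⟩ : Heisenberg ℤ) * (⟨0, d, gD.z⟩ : Heisenberg ℤ) ^ j0 *
      (⟨0, 0, m⟩ : Heisenberg ℤ) ^ k0 = ⟨a, gA.y % d, z1 % m⟩ := by
    rw [zpow_xzero, zpow_central]
    ext
    · dsimp only [mul_x]; ring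
    · dsimp only [mul_y]
      rw [Int.emod_def, hj0]; ring
    · dsimp only [mul_z, mul_x, mul_y]
      rw [Int.emod_def, hk0, hz1, hj0]; push_cast; ring
  have P2 : (⟨0, d, gD.z⟩ : Heisenberg ℤ) * (⟨0, 0, m⟩ : Heisenberg ℤ) ^ k1
      = ⟨0, d, gD.z % m⟩ := by
    rw [zpow_central]
    ext
    · dsimp only [mul_x]; ring
    · dsimp only [mul_y]; ring
    · dsimp only [mul_z, mul_x, mul_y]
      rw [Int.emod_def, hk1]; push_cast; ring
  have heq : Hgen a gA.y d m gA.z gD.z = Hgen a (gA.y % d) d m (z1 % m) (gD.z % m) := by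
    apply le_antisymm
    · rw [Hgen, Subgroup.closure_le]
      have hg2K : (⟨0, d, gD.z⟩ : Heisenberg ℤ) ∈ Hgen a (gA.y % d) d m (z1 % m) (gD.z % m) := by
        have h : (⟨0, d, gD.z⟩ : Heisenberg ℤ)
            = (⟨0, d, gD.z % m⟩ : Heisenberg ℤ) * ((⟨0, 0, m⟩ : Heisenberg ℤ) ^ k1)⁻¹ :=
          eq_mul_inv_of_mul_eq P2
        rw [h]
        exact Subgroup.mul_mem _ (g2_mem a (gA.y % d) d m (z1 % m) (gD.z % m)) (Subgroup.inv_mem _ (Subgroup.zpow_mem _ (g3_mem a (gA.y % d) d m (z1 % m) (gD.z % m)) k1))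
      rintro g (rfl | rfl | rfl)
      · have h : (⟨a, gA.y, gA.z⟩ : Heisenberg ℤ)
            = (⟨a, gA.y % d, z1 % m⟩ : Heisenberg ℤ) * ((⟨0, 0, m⟩ : Heisenberg ℤ) ^ k0)⁻¹ *
              ((⟨0, d, gD.z⟩ : Heisenberg ℤ) ^ j0)⁻¹ := by
          rw [← P1]; group
        rw [h]
        exact Subgroup.mul_mem _ (Subgroup.mul_mem _ (g1_mem a (gA.y % d) d m (z1 % m) (gD.z % m))
          (Subgroup.inv_mem _ (Subgroup.zpow_mem _ (g3_mem a (gA.y % d) d m (z1 % m) (gD.z % m)) k0)))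
          (Subgroup.inv_mem _ (Subgroup.zpow_mem _ hg2K j0))
      · exact hg2K
      · exact g3_mem a (gA.y % d) d m (z1 % m) (gD.z % m)
    · rw [Hgen, Subgroup.closure_le]
      rintro g (rfl | rfl | rfl)
      · rw [← P1]
        exact Subgroup.mul_mem _ (Subgroup.mul_mem _ (g1_mem a gA.y d m gA.z gD.z)
          (Subgroup.zpow_mem _ (g2_mem a gA.y d m gA.z gD.z) j0)) (Subgroup.zpow_mem _ (g3_mem a gA.y d m gA.z gD.z) k0)
      · rw [← P2]
        exact Subgroup.mul_mem _ (g2_mem a gA.y d m gA.z gD.z) (Subgroup.zpow_mem _ (g3_mem a gA.y d m gA.z gD.z) k1)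
      · exact g3_mem a gA.y d m gA.z gD.z
  refine ⟨a, gA.y % d, d, m, z1 % m, gD.z % m, ha, hd, hm0, hm,
    Int.emod_nonneg _ (by omega), Int.emod_lt_of_pos _ hd,
    Int.emod_nonneg _ (by omega), Int.emod_lt_of_pos _ hm0,
    Int.emod_nonneg _ (by omega), Int.emod_lt_of_pos _ hm0, ?_⟩
  rw [hstep1, heq]


lemma dvd_x_of_mem {a s d m u v : ℤ} (hm : m ∣ a * d) {g : Heisenberg ℤ}
    (hg : g ∈ Hgen a s d m u v) : a ∣ g.x := by
  obtain ⟨i, j, hx, hy, hz⟩ := (mem_Hgen hm g).mp hg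
  exact ⟨i, by linarith⟩

lemma dvd_y_of_mem {a s d m u v : ℤ} (ha : 0 < a) (hm : m ∣ a * d) {g : Heisenberg ℤ}
    (hg : g ∈ Hgen a s d m u v) (hx0 : g.x = 0) : d ∣ g.y := by
  obtain ⟨i, j, hx, hy, hz⟩ := (mem_Hgen hm g).mp hg
  have hia : i * a = 0 := by rw [← hx, hx0]
  have hi : i = 0 := by
    rcases mul_eq_zero.mp hia with h | h
    · exact h
    · omega
  exact ⟨j, by rw [hy, hi]; ring⟩

lemma dvd_z_of_mem {a s d m u v : ℤ} (ha : 0 < a) (hd : 0 < d) (hm : m ∣ a * d)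
    {g : Heisenberg ℤ} (hg : g ∈ Hgen a s d m u v) (hx0 : g.x = 0) (hy0 : g.y = 0) :
    m ∣ g.z := by
  obtain ⟨i, j, hx, hy, hz⟩ := (mem_Hgen hm g).mp hg
  have hia : i * a = 0 := by rw [← hx, hx0]
  have hi : i = 0 := by
    rcases mul_eq_zero.mp hia with h | h
    · exact h
    · omega
  have hj : j = 0 := by
    rw [hi] at hy
    rcases mul_eq_zero.mp (by linarith [hy ▸ hy0] : j * d = 0) with h | h
    · exact h
    · omega
  rw [hi, hj] at hz
  have : W a s d u v 0 0 = 0 := by simp [W]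
  rw [this, sub_zero] at hz
  exact (mul_dvd_mul_iff_left (by norm_num : (2:ℤ) ≠ 0)).mp hz

/-- Canonical parameters are uniquely determined by the subgroup. -/
lemma params_eq {a s d m u v a' s' d' m' u' v' : ℤ}
    (ha : 0 < a) (hd : 0 < d) (hm0 : 0 < m) (hm : m ∣ a * d)
    (hs0 : 0 ≤ s) (hsd : s < d) (hu0 : 0 ≤ u) (hum : u < m) (hv0 : 0 ≤ v) (hvm : v < m)
    (ha' : 0 < a') (hd' : 0 < d') (hm0' : 0 < m') (hm' : m' ∣ a' * d')
    (hs0' : 0 ≤ s') (hsd' : s' < d') (hu0' : 0 ≤ u') (hum' : u' < m') (hv0' : 0 ≤ v') (hvm' : v' < m')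
    (h : Hgen a s d m u v = Hgen a' s' d' m' u' v') :
    a = a' ∧ s = s' ∧ d = d' ∧ m = m' ∧ u = u' ∧ v = v' := by
  have hg1' : (⟨a', s', u'⟩ : Heisenberg ℤ) ∈ Hgen a s d m u v := h ▸ g1_mem a' s' d' m' u' v'
  have hg2' : (⟨0, d', v'⟩ : Heisenberg ℤ) ∈ Hgen a s d m u v := h ▸ g2_mem a' s' d' m' u' v'
  have hg3' : (⟨0, 0, m'⟩ : Heisenberg ℤ) ∈ Hgen a s d m u v := h ▸ g3_mem a' s' d' m' u' v'
  have hg1 : (⟨a, s, u⟩ : Heisenberg ℤ) ∈ Hgen a' s' d' m' u' v' := h ▸ g1_mem a s d m u v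
  have hg2 : (⟨0, d, v⟩ : Heisenberg ℤ) ∈ Hgen a' s' d' m' u' v' := h ▸ g2_mem a s d m u v
  have hg3 : (⟨0, 0, m⟩ : Heisenberg ℤ) ∈ Hgen a' s' d' m' u' v' := h ▸ g3_mem a s d m u v
  have haa : a = a' :=
    Int.dvd_antisymm ha.le ha'.le (dvd_x_of_mem hm hg1') (dvd_x_of_mem hm' hg1)
  have hdd : d = d' :=
    Int.dvd_antisymm hd.le hd'.le (dvd_y_of_mem ha hm hg2' rfl) (dvd_y_of_mem ha' hm' hg2 rfl)
  have hmm : m = m' :=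
    Int.dvd_antisymm hm0.le hm0'.le (dvd_z_of_mem ha hd hm hg3' rfl rfl)
      (dvd_z_of_mem ha' hd' hm' hg3 rfl rfl)
  obtain ⟨i, j, hx, hy, hz⟩ := (mem_Hgen hm _).mp hg1'
  have hi : i = 1 := by
    have : (i - 1) * a = 0 := by dsimp only at hx; rw [← haa] at hx; linarith
    rcases mul_eq_zero.mp this with hh | hh
    · omega
    · omega
  have hss : s = s' := by
    dsimp only at hy
    rw [hi] at hy
    have hdvd : d ∣ s' - s := ⟨j, by linarith⟩
    have h0 : s' - s = 0 := Int.eq_zero_of_abs_lt_dvd hdvd (by rw [abs_lt]; omega)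
    omega
  have hj : j = 0 := by
    dsimp only at hy
    rw [hi, ← hss] at hy
    have : j * d = 0 := by linarith
    rcases mul_eq_zero.mp this with hh | hh
    · exact hh
    · omega
  have huu : u = u' := by
    dsimp only at hz
    rw [hi, hj] at hz
    have hW : W a s d u v 1 0 = 2 * u := by simp [W]
    rw [hW] at hz
    have hdvd : m ∣ u' - u := by
      have h2 : (2 * m) ∣ 2 * (u' - u) := by
        have he : 2 * u' - 2 * u = 2 * (u' - u) := by ring
        rwa [he] at hz
      exact (mul_dvd_mul_iff_left (by norm_num : (2:ℤ) ≠ 0)).mp h2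
    have h0 : u' - u = 0 := Int.eq_zero_of_abs_lt_dvd hdvd (by rw [abs_lt]; omega)
    omega
  have hvv : v = v' := by
    obtain ⟨i2, j2, hx2, hy2, hz2⟩ := (mem_Hgen hm _).mp hg2'
    have hi2 : i2 = 0 := by
      dsimp only at hx2
      rcases mul_eq_zero.mp hx2.symm with hh | hh
      · exact hh
      · omega
    have hj2 : j2 = 1 := by
      dsimp only at hy2
      rw [hi2] at hy2
      have : (j2 - 1) * d = 0 := by rw [← hdd] at hy2; linarith
      rcases mul_eq_zero.mp this with hh | hh
      · omega
      · omega
    dsimp only at hz2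
    rw [hi2, hj2] at hz2
    have hW : W a s d u v 0 1 = 2 * v := by simp [W]
    rw [hW] at hz2
    have hdvd : m ∣ v' - v := by
      have h2 : (2 * m) ∣ 2 * (v' - v) := by
        have he : 2 * v' - 2 * v = 2 * (v' - v) := by ring
        rwa [he] at hz2
      exact (mul_dvd_mul_iff_left (by norm_num : (2:ℤ) ≠ 0)).mp h2
    have h0 : v' - v = 0 := Int.eq_zero_of_abs_lt_dvd hdvd (by rw [abs_lt]; omega)
    omega
  exact ⟨haa, hss, hdd, hmm, huu, hvv⟩

/-- Exponent triples `(α, δ, β)` with `α + δ + β = n` and `β ≤ α + δ`. -/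
def U (n : ℕ) : Finset (ℕ × ℕ × ℕ) :=
  (Finset.range (n+1) ×ˢ Finset.range (n+1) ×ˢ Finset.range (n+1)).filter
    (fun t => t.1 + t.2.1 + t.2.2 = n ∧ t.2.2 ≤ t.1 + t.2.1)

/-- The number of index-`p^n` subgroups, as an explicit sum. -/
def cnt (p n : ℕ) : ℕ := ∑ t ∈ U n, p ^ t.2.1 * p ^ t.2.2 * p ^ t.2.2

lemma count_subgroups (p : ℕ) (hp : p.Prime) (n : ℕ) :
    Nat.card {K : Subgroup (Heisenberg ℤ) // K.index = p ^ n} = cnt p n := by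
  have hp1 : 1 < p := hp.one_lt
  have htn : ∀ x y : ℤ, 0 ≤ x → 0 ≤ y → (x * y).toNat = x.toNat * y.toNat := by
    intro x y hx hy
    lift x to ℕ using hx
    lift y to ℕ using hy
    rw [← Nat.cast_mul, Int.toNat_natCast, Int.toNat_natCast, Int.toNat_natCast]
  -- the parameter type
  let T := Σ t : {x : ℕ × ℕ × ℕ // x ∈ U n}, (Fin (p ^ t.1.2.1) × Fin (p ^ t.1.2.2) × Fin (p ^ t.1.2.2))
  have memU : ∀ x : ℕ × ℕ × ℕ, x ∈ U n ↔ x.1 + x.2.1 + x.2.2 = n ∧ x.2.2 ≤ x.1 + x.2.1 := by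
    intro x
    simp only [U, Finset.mem_filter, Finset.mem_product, Finset.mem_range]
    omega
  -- the map from parameters to subgroups
  have hF : ∀ (α δ β : ℕ), β ≤ α + δ → α + δ + β = n →
      (Hgen ((p:ℤ)^α) 0 ((p:ℤ)^δ) ((p:ℤ)^β) 0 0).index = p ^ n → True := fun _ _ _ _ _ _ => trivial
  clear hF
  have hidx : ∀ (α δ β : ℕ) (s u v : ℤ), β ≤ α + δ → α + δ + β = n →
      (Hgen ((p:ℤ)^α) s ((p:ℤ)^δ) ((p:ℤ)^β) u v).index = p ^ n := by
    intro α δ β s u v hβ hsum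
    have hm : ((p:ℤ)^β) ∣ ((p:ℤ)^α * (p:ℤ)^δ) := by
      rw [← pow_add]
      exact pow_dvd_pow _ hβ
    rw [index_Hgen (by positivity) (by positivity) (by positivity) hm]
    have : ((p:ℤ)^α * (p:ℤ)^δ * (p:ℤ)^β) = ((p ^ n : ℕ) : ℤ) := by
      push_cast
      rw [← pow_add, ← pow_add, hsum]
    rw [this, Int.toNat_natCast]
  let F : T → {K : Subgroup (Heisenberg ℤ) // K.index = p ^ n} :=
    fun t => ⟨Hgen ((p:ℤ)^t.1.1.1) (t.2.1 : ℤ) ((p:ℤ)^t.1.1.2.1) ((p:ℤ)^t.1.1.2.2)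
      (t.2.2.1 : ℤ) (t.2.2.2 : ℤ),
      hidx _ _ _ _ _ _ ((memU _).mp t.1.2).2 ((memU _).mp t.1.2).1⟩
  have hcanon : ∀ (α δ β : ℕ) (su : Fin (p^δ)) (uu vv : Fin (p^β)),
      (0:ℤ) < (p:ℤ)^α ∧ (0:ℤ) < (p:ℤ)^δ ∧ (0:ℤ) < (p:ℤ)^β ∧
      (0:ℤ) ≤ (su:ℤ) ∧ (su:ℤ) < (p:ℤ)^δ ∧ (0:ℤ) ≤ (uu:ℤ) ∧ (uu:ℤ) < (p:ℤ)^β ∧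
      (0:ℤ) ≤ (vv:ℤ) ∧ (vv:ℤ) < (p:ℤ)^β := by
    intro α δ β su uu vv
    refine ⟨by positivity, by positivity, by positivity, by positivity, ?_, by positivity, ?_,
      by positivity, ?_⟩
    · exact_mod_cast su.isLt
    · exact_mod_cast uu.isLt
    · exact_mod_cast vv.isLt
  have hpowinj : ∀ x y : ℕ, ((p:ℤ))^x = (p:ℤ)^y → x = y := by
    intro x y hxy
    refine Nat.pow_right_injective hp.two_le (?_ : p ^ x = p ^ y)
    exact_mod_cast hxy
  have hbij : Function.Bijective F := by
    constructor
    · rintro ⟨⟨⟨α, δ, β⟩, hU1⟩, ⟨su, uu, vv⟩⟩ ⟨⟨⟨α', δ', β'⟩, hU2⟩, ⟨su', uu', vv'⟩⟩ heq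
      simp only [F, Subtype.mk.injEq] at heq
      obtain ⟨c1, c2, c3, c4, c5, c6, c7, c8, c9⟩ := hcanon α δ β su uu vv
      obtain ⟨d1, d2, d3, d4, d5, d6, d7, d8, d9⟩ := hcanon α' δ' β' su' uu' vv'
      have hm : ((p:ℤ)^β) ∣ ((p:ℤ)^α * (p:ℤ)^δ) := by
        rw [← pow_add]; exact pow_dvd_pow _ ((memU _).mp hU1).2
      have hm' : ((p:ℤ)^β') ∣ ((p:ℤ)^α' * (p:ℤ)^δ') := by
        rw [← pow_add]; exact pow_dvd_pow _ ((memU _).mp hU2).2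
      obtain ⟨e1, e2, e3, e4, e5, e6⟩ := params_eq c1 c2 c3 hm c4 c5 c6 c7 c8 c9
        d1 d2 d3 hm' d4 d5 d6 d7 d8 d9 heq
      have hα : α = α' := hpowinj _ _ e1
      have hδ : δ = δ' := hpowinj _ _ e3
      have hβ : β = β' := hpowinj _ _ e4
      subst hα hδ hβ
      have hsu : su = su' := Fin.ext (by exact_mod_cast e2)
      have huu : uu = uu' := Fin.ext (by exact_mod_cast e5)
      have hvv : vv = vv' := Fin.ext (by exact_mod_cast e6)
      subst hsu huu hvv
      rfl
    · rintro ⟨K, hK⟩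
      have hKne : K.index ≠ 0 := by rw [hK]; positivity
      obtain ⟨a, s, d, m, u, v, ha, hd, hm0, hm, hs0, hsd, hu0, hum, hv0, hvm, hKeq⟩ :=
        exists_params K hKne
      have hidx2 : a.toNat * d.toNat * m.toNat = p ^ n := by
        have h := hK
        rw [hKeq, index_Hgen ha hd hm0 hm,
          htn _ _ (mul_nonneg ha.le hd.le) hm0.le, htn _ _ ha.le hd.le] at h
        exact h
      obtain ⟨α, hαn, haval⟩ := (Nat.dvd_prime_pow hp).mp
        (⟨d.toNat * m.toNat, by rw [← hidx2]; ring⟩ : a.toNat ∣ p ^ n)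
      obtain ⟨δ, hδn, hdval⟩ := (Nat.dvd_prime_pow hp).mp
        (⟨a.toNat * m.toNat, by rw [← hidx2]; ring⟩ : d.toNat ∣ p ^ n)
      obtain ⟨β, hβn, hmval⟩ := (Nat.dvd_prime_pow hp).mp
        (⟨a.toNat * d.toNat, by rw [← hidx2]; ring⟩ : m.toNat ∣ p ^ n)
      have hsum : α + δ + β = n := by
        apply Nat.pow_right_injective hp.two_le
        show p ^ (α + δ + β) = p ^ n
        rw [pow_add, pow_add, ← haval, ← hdval, ← hmval, hidx2]
      have hβle : β ≤ α + δ := by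
        rw [← Nat.pow_dvd_pow_iff_le_right hp1, pow_add, ← haval, ← hdval, ← hmval]
        obtain ⟨c, hc⟩ := hm
        have hcpos : 0 ≤ c := by nlinarith
        refine ⟨c.toNat, ?_⟩
        rw [← htn _ _ ha.le hd.le, ← htn _ _ hm0.le hcpos, ← hc]
      have hUmem : ((α, δ, β) : ℕ × ℕ × ℕ) ∈ U n := (memU _).mpr ⟨hsum, hβle⟩
      have hsb : s.toNat < p ^ δ := by rw [← hdval]; omega
      have hub : u.toNat < p ^ β := by rw [← hmval]; omega
      have hvb : v.toNat < p ^ β := by rw [← hmval]; omega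
      refine ⟨⟨⟨(α, δ, β), hUmem⟩, (⟨s.toNat, hsb⟩, ⟨u.toNat, hub⟩, ⟨v.toNat, hvb⟩)⟩, ?_⟩
      have ea : ((p:ℤ))^α = a := by
        rw [← Int.toNat_of_nonneg ha.le, haval]; push_cast; ring
      have ed : ((p:ℤ))^δ = d := by
        rw [← Int.toNat_of_nonneg hd.le, hdval]; push_cast; ring
      have em : ((p:ℤ))^β = m := by
        rw [← Int.toNat_of_nonneg hm0.le, hmval]; push_cast; ring
      apply Subtype.ext
      show Hgen ((p:ℤ)^α) ((s.toNat : ℕ) : ℤ) ((p:ℤ)^δ) ((p:ℤ)^β) ((u.toNat : ℕ) : ℤ)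
        ((v.toNat : ℕ) : ℤ) = K
      rw [ea, ed, em, Int.toNat_of_nonneg hs0, Int.toNat_of_nonneg hu0,
        Int.toNat_of_nonneg hv0, hKeq]
  rw [← Nat.card_eq_of_bijective F hbij, Nat.card_eq_fintype_card, Fintype.card_sigma]
  simp only [Fintype.card_prod, Fintype.card_fin]
  rw [show cnt p n = ∑ t ∈ U n, p ^ t.2.1 * p ^ t.2.2 * p ^ t.2.2 from rfl,
    ← Finset.sum_coe_sort (U n) (fun t => p ^ t.2.1 * p ^ t.2.2 * p ^ t.2.2)]
  exact Finset.sum_congr rfl fun x _ => by ring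

open PowerSeries in
noncomputable def geo (r : ℚ) : PowerSeries ℚ := PowerSeries.mk fun n => r ^ n

open PowerSeries in
noncomputable def Ege (q : ℚ) : PowerSeries ℚ :=
  PowerSeries.mk fun n => if Even n then q ^ (n / 2) else 0

open PowerSeries in
lemma geo_unit (r : ℚ) : geo r * (1 - C r * X) = 1 := by
  ext n
  cases n with
  | zero => simp [geo]
  | succ n =>
    rw [mul_sub, mul_one, map_sub]
    rw [show geo r * (C r * X) = C r * X * geo r from by ring]
    rw [mul_assoc, PowerSeries.coeff_C_mul, PowerSeries.coeff_succ_X_mul]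
    simp [geo, pow_succ, mul_comm]

open PowerSeries in
lemma Ege_unit (q : ℚ) : Ege q * (1 - C q * X ^ 2) = 1 := by
  ext n
  rw [mul_sub, mul_one, map_sub]
  rw [show Ege q * (C q * X ^ 2) = C q * (X ^ 2 * Ege q) from by ring]
  rw [PowerSeries.coeff_C_mul]
  match n with
  | 0 => simp [Ege]
  | 1 =>
    have h2 : (PowerSeries.coeff 1) (X ^ 2 * Ege q) = 0 := by
      rw [show (X : PowerSeries ℚ) ^ 2 * Ege q = X * (X * Ege q) from by ring,
        show (1 : ℕ) = 0 + 1 from rfl, PowerSeries.coeff_succ_X_mul]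
      simp [PowerSeries.coeff_zero_eq_constantCoeff]
    rw [h2]
    simp [Ege, Nat.even_iff]
  | (k+2) =>
    rw [PowerSeries.coeff_X_pow_mul]
    simp only [Ege, PowerSeries.coeff_mk, PowerSeries.coeff_one]
    have he2 : Even (k+2) ↔ Even k := by simp [Nat.even_add]
    by_cases hk : Even k
    · rw [if_pos hk, if_pos (he2.mpr hk)]
      rw [show (k+2)/2 = k/2 + 1 from by omega, pow_succ]
      simp [Nat.add_eq_zero]
      ring
    · rw [if_neg hk, if_neg (fun h => hk (he2.mp h))]
      simp [Nat.add_eq_zero]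

open PowerSeries in
lemma coeff_geo_mul_Ege (r q : ℚ) (n : ℕ) :
    (PowerSeries.coeff n) (geo r * Ege q)
      = ∑ β ∈ Finset.range (n / 2 + 1), r ^ (n - 2 * β) * q ^ β := by
  rw [PowerSeries.coeff_mul, Finset.Nat.sum_antidiagonal_eq_sum_range_succ_mk]
  simp only [geo, Ege, PowerSeries.coeff_mk]
  rw [show (∑ k ∈ Finset.range (n + 1), r ^ k * if Even (n - k) then q ^ ((n - k) / 2) else 0)
      = ∑ k ∈ Finset.range (n + 1), if Even (n - k) then r ^ k * q ^ ((n - k) / 2) else 0 from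
    Finset.sum_congr rfl fun k _ => by split <;> simp]
  rw [← Finset.sum_filter]
  refine Finset.sum_nbij' (fun k => (n - k) / 2) (fun β => n - 2 * β) ?_ ?_ ?_ ?_ ?_
  · intro k hk
    simp only [Finset.mem_filter, Finset.mem_range] at hk
    obtain ⟨hk1, ⟨c, hc⟩⟩ := hk
    simp only [Finset.mem_range]
    omega
  · intro β hβ
    simp only [Finset.mem_range] at hβ
    simp only [Finset.mem_filter, Finset.mem_range]
    exact ⟨by omega, ⟨β, by omega⟩⟩
  · intro k hk
    simp only [Finset.mem_filter, Finset.mem_range] at hk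
    obtain ⟨hk1, ⟨c, hc⟩⟩ := hk
    omega
  · intro β hβ
    simp only [Finset.mem_range] at hβ
    omega
  · intro k hk
    simp only [Finset.mem_filter, Finset.mem_range] at hk
    obtain ⟨hk1, ⟨c, hc⟩⟩ := hk
    rw [show n - 2 * ((n - k) / 2) = k from by omega]

/-- `cnt` as an explicit double sum. -/
lemma cnt_double_sum (p n : ℕ) :
    cnt p n = ∑ β ∈ Finset.range (n / 2 + 1), ∑ δ ∈ Finset.range (n - β + 1),
      p ^ (2 * β) * p ^ δ := by
  rw [cnt, ← Finset.sum_sigma (Finset.range (n / 2 + 1)) (fun β => Finset.range (n - β + 1))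
    (fun t => p ^ (2 * t.1) * p ^ t.2)]
  refine Finset.sum_nbij' (fun t => ⟨t.2.2, t.2.1⟩) (fun t => (n - t.1 - t.2, t.2, t.1)) ?_ ?_ ?_ ?_ ?_
  · intro t ht
    simp only [U, Finset.mem_filter, Finset.mem_product, Finset.mem_range] at ht
    simp only [Finset.mem_sigma, Finset.mem_range]
    omega
  · intro t ht
    simp only [Finset.mem_sigma, Finset.mem_range] at ht
    simp only [U, Finset.mem_filter, Finset.mem_product, Finset.mem_range]
    omega
  · intro t ht
    simp only [U, Finset.mem_filter, Finset.mem_product, Finset.mem_range] at ht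
    obtain ⟨h1, h2⟩ := ht
    ext <;> dsimp <;> omega
  · intro t ht
    simp only [Finset.mem_sigma, Finset.mem_range] at ht
    rfl
  · intro t ht
    simp only [U, Finset.mem_filter, Finset.mem_product, Finset.mem_range] at ht
    dsimp
    rw [pow_mul]
    ring

open PowerSeries in
lemma star_identity (p : ℕ) :
    C ((p:ℚ) - 1) * PowerSeries.mk (fun n => (cnt p n : ℚ))
      = C (p:ℚ) * (geo (p:ℚ) * Ege ((p:ℚ)^3)) - geo 1 * Ege ((p:ℚ)^2) := by
  ext n
  rw [PowerSeries.coeff_C_mul, PowerSeries.coeff_mk, map_sub, PowerSeries.coeff_C_mul,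
    coeff_geo_mul_Ege, coeff_geo_mul_Ege, cnt_double_sum]
  push_cast
  rw [Finset.mul_sum]
  rw [show (p:ℚ) * ∑ β ∈ Finset.range (n / 2 + 1), (p:ℚ)^(n-2*β) * ((p:ℚ)^3)^β
      = ∑ β ∈ Finset.range (n / 2 + 1), (p:ℚ) * ((p:ℚ)^(n-2*β) * ((p:ℚ)^3)^β) from by
    rw [Finset.mul_sum]]
  rw [← Finset.sum_sub_distrib]
  refine Finset.sum_congr rfl fun β hβ => ?_
  simp only [Finset.mem_range] at hβ
  have h2β : 2 * β ≤ n := by omega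
  have hgeom : ((p:ℚ) - 1) * ∑ δ ∈ Finset.range (n - β + 1), (p:ℚ)^(2*β) * (p:ℚ)^δ
      = (p:ℚ)^(2*β) * ((p:ℚ)^(n-β+1) - 1) := by
    rw [show (∑ δ ∈ Finset.range (n - β + 1), (p:ℚ)^(2*β) * (p:ℚ)^δ)
        = (p:ℚ)^(2*β) * ∑ δ ∈ Finset.range (n - β + 1), (p:ℚ)^δ from by rw [Finset.mul_sum]]
    rw [mul_left_comm, mul_comm ((p:ℚ) - 1), geom_sum_mul]
  rw [hgeom, one_pow, mul_sub, mul_one, ← pow_add]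
  rw [show (p:ℚ) * ((p:ℚ)^(n-2*β) * ((p:ℚ)^3)^β) = (p:ℚ)^(1 + (n - 2*β) + 3*β) from by
    rw [pow_add, pow_add, pow_mul]; ring]
  rw [show ((p:ℚ)^2)^β = (p:ℚ)^(2*β) from by rw [← pow_mul]]
  rw [show 2*β + (n - β + 1) = 1 + (n - 2*β) + 3*β from by omega]
  rw [one_mul]


end Heisenberg

open PowerSeries in
/-- **The local subgroup zeta function of the integral Heisenberg group** (Grunewald–Segal–Smith):
for every prime `p`,
`(∑_{i≥0} a_{p^i}(H(ℤ)) Y^i) (1-Y)(1-pY)(1-p²Y²)(1-p³Y²) = 1 - p³Y³`,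
i.e. `ζ_{H(ℤ)}(s) = ζ(s)ζ(s-1)ζ(2s-2)ζ(2s-3)ζ(3s-3)⁻¹` factor by factor at each prime. -/
theorem local_subgroup_zeta_heisenberg (p : ℕ) (hp : p.Prime) :
    (PowerSeries.mk fun i => (subgroupCount (Heisenberg ℤ) (p ^ i) : ℚ)) *
        ((1 - X) * (1 - (p : PowerSeries ℚ) * X) * (1 - (p : PowerSeries ℚ) ^ 2 * X ^ 2) *
          (1 - (p : PowerSeries ℚ) ^ 3 * X ^ 2))
      = 1 - (p : PowerSeries ℚ) ^ 3 * X ^ 3 := by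
  have hcnt : (PowerSeries.mk fun i => (subgroupCount (Heisenberg ℤ) (p ^ i) : ℚ))
      = PowerSeries.mk fun i => (Heisenberg.cnt p i : ℚ) := by
    ext i
    rw [PowerSeries.coeff_mk, PowerSeries.coeff_mk]
    norm_cast
    exact Heisenberg.count_subgroups p hp i
  rw [hcnt]
  have hps : ((p : PowerSeries ℚ)) = C (p:ℚ) := by rw [← map_natCast (C : ℚ →+* PowerSeries ℚ) p]
  rw [hps]
  have h1 := Heisenberg.geo_unit (p:ℚ)
  have h2 := Heisenberg.geo_unit 1
  rw [map_one, one_mul] at h2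
  have h3 := Heisenberg.Ege_unit ((p:ℚ)^2)
  have h4 := Heisenberg.Ege_unit ((p:ℚ)^3)
  rw [map_pow] at h3 h4
  have hstar := Heisenberg.star_identity p
  rw [map_sub, map_one] at hstar
  have hCne : (C (p:ℚ) - 1) ≠ 0 := by
    intro h
    have h0 := congrArg (PowerSeries.constantCoeff) h
    simp only [map_sub, map_one, PowerSeries.constantCoeff_C, map_zero] at h0
    rw [sub_eq_zero] at h0
    have hge := hp.one_lt
    have : p = 1 := by exact_mod_cast h0
    omega
  apply mul_left_cancel₀ hCne
  have hA : (Heisenberg.geo (p:ℚ) * Heisenberg.Ege ((p:ℚ)^3)) *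
      ((1 - C (p:ℚ) * X) * (1 - (C (p:ℚ))^3 * X^2)) = 1 := by
    rw [mul_mul_mul_comm, h1, h4, one_mul]
  have hB : (Heisenberg.geo 1 * Heisenberg.Ege ((p:ℚ)^2)) *
      ((1 - X) * (1 - (C (p:ℚ))^2 * X^2)) = 1 := by
    rw [mul_mul_mul_comm, h2, h3, one_mul]
  linear_combination ((1 - X) * (1 - C (p:ℚ) * X) * (1 - (C (p:ℚ))^2 * X^2) *
      (1 - (C (p:ℚ))^3 * X^2)) * hstar
    + (C (p:ℚ) * (1 - X) * (1 - (C (p:ℚ))^2 * X^2)) * hA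
    - ((1 - C (p:ℚ) * X) * (1 - (C (p:ℚ))^3 * X^2)) * hB
end

section
/- Let n ≥ 2 be an integer and set r = n − 1. For a tuple a = (a₁,…,a_r) ∈ ℕ₀^r, define the Weyl dimension D(a) = ∏_{1 ≤ i ≤ j ≤ r} ( (a_i + a_{i+1} + ⋯ + a_j + (j − i + 1)) / (j − i + 1) ), a positive rational number. Then for every real s > 0, the family (D(a)^{−s})_{a ∈ ℕ₀^r} of positive real numbers is summable if and only if s > 2/n. (This is the statement that the abscissa of convergence of the Witten zeta function ζ^{irr}_{SL_n(ℂ)}(s) = ∑_a D(a)^{−s} equals r/κ with κ = n(n−1)/2 the number of positive roots of the root system A_{n−1}.) -/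
lemma aux_ite_left {r : ℕ} (x : Fin r → ℝ) :
    (∏ i : Fin r, ∏ j : Fin r, (if i ≤ j then x i else 1))
      = ∏ k : Fin r, x k ^ (r - (k : ℕ)) := by
  refine Finset.prod_congr rfl fun i _ => ?_
  rw [Finset.prod_ite, Finset.prod_const, Finset.prod_const, one_pow, mul_one]
  congr 1
  have h : (Finset.univ.filter fun j : Fin r => i ≤ j) = Finset.Ici i := by
    ext j; simp
  rw [h, Fin.card_Ici]

lemma aux_ite_right {r : ℕ} (y : Fin r → ℝ) :
    (∏ i : Fin r, ∏ j : Fin r, (if i ≤ j then y j else 1))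
      = ∏ k : Fin r, y k ^ ((k : ℕ) + 1) := by
  rw [Finset.prod_comm]
  refine Finset.prod_congr rfl fun j _ => ?_
  rw [Finset.prod_ite, Finset.prod_const, Finset.prod_const, one_pow, mul_one]
  congr 1
  have h : (Finset.univ.filter fun i : Fin r => i ≤ j) = Finset.Iic j := by
    ext i; simp
  rw [h, Fin.card_Iic]

lemma aux_ite_pair {r : ℕ} (z : Fin r → ℝ) :
    (∏ i : Fin r, ∏ j : Fin r, (if i ≤ j then z i * z j else 1))
      = ∏ k : Fin r, z k ^ (r + 1) := by
  have h : ∀ i j : Fin r, (if i ≤ j then z i * z j else 1)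
      = (if i ≤ j then z i else 1) * (if i ≤ j then z j else 1) := by
    intro i j; split_ifs <;> ring
  simp only [h, Finset.prod_mul_distrib]
  rw [aux_ite_left, aux_ite_right, ← Finset.prod_mul_distrib]
  refine Finset.prod_congr rfl fun k _ => ?_
  rw [← pow_add]
  congr 1
  have := k.isLt
  omega

lemma aux_ite_const {r : ℕ} (c : ℝ) :
    (∏ i : Fin r, ∏ j : Fin r, (if i ≤ j then c else 1))
      = c ^ (Finset.univ.filter fun p : Fin r × Fin r => p.1 ≤ p.2).card := by
  rw [← Finset.prod_product']
  rw [Finset.prod_ite, Finset.prod_const, Finset.prod_const, one_pow, mul_one]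
  congr 1

lemma aux_gauss : ∀ m : ℕ, 2 * ∑ j ∈ Finset.range m, (j + 1) = m * (m + 1) := by
  intro m
  induction m with
  | zero => simp
  | succ k ih => rw [Finset.sum_range_succ, Nat.mul_add, ih]; ring

lemma aux_two_K {r : ℕ} :
    2 * (Finset.univ.filter fun p : Fin r × Fin r => p.1 ≤ p.2).card = r * (r + 1) := by
  have h1 : (Finset.univ.filter fun p : Fin r × Fin r => p.1 ≤ p.2).card
      = ∑ i : Fin r, (r - (i : ℕ)) := by
    rw [Finset.card_filter, Fintype.sum_prod_type]
    refine Finset.sum_congr rfl fun i _ => ?_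
    rw [← Finset.card_filter]
    have h : (Finset.univ.filter fun j : Fin r => i ≤ j) = Finset.Ici i := by
      ext j; simp
    rw [h, Fin.card_Ici]
  rw [h1, Fin.sum_univ_eq_sum_range, ← Finset.sum_range_reflect]
  have h2 : ∀ j ∈ Finset.range r, r - (r - 1 - j) = j + 1 := by
    intro j hj; have := Finset.mem_range.1 hj; omega
  rw [Finset.sum_congr rfl h2]
  exact aux_gauss r

lemma aux_summable_pi (c : ℝ) (hc : 1 < c) (m : ℕ) :
    Summable (fun a : Fin m → ℕ => ∏ i, ((a i : ℝ) + 1) ^ (-c)) := by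
  induction m with
  | zero =>
    simpa using summable_of_finite_support (Set.toFinite _)
  | succ m ih =>
    have base : Summable (fun k : ℕ => ((k : ℝ) + 1) ^ (-c)) := by
      have h : Summable (fun n : ℕ => (n : ℝ) ^ (-c)) :=
        Real.summable_nat_rpow.2 (by linarith)
      have h2 := h.comp_injective Nat.succ_injective
      refine h2.congr fun k => ?_
      simp [Function.comp, Nat.succ_eq_add_one]
    have hmul := base.mul_of_nonneg ih
      (fun k => Real.rpow_nonneg (by positivity) _)
      (fun a => Finset.prod_nonneg fun i _ => Real.rpow_nonneg (by positivity) _)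
    rw [← Equiv.summable_iff (Fin.consEquiv fun _ => ℕ)]
    refine hmul.congr fun p => ?_
    simp only [Function.comp, Fin.consEquiv_apply]
    rw [Fin.prod_univ_succ]
    simp


set_option maxHeartbeats 1000000

/-- **The abscissa of convergence of the Witten zeta function of `SL_n(ℂ)`**
(Larsen–Lubotzky). Let `n ≥ 2`, `r = n - 1`, and for `a ∈ ℕ₀^r` let `D a` be the Weyl
dimension `∏_{1 ≤ i ≤ j ≤ r} ((a_i + ⋯ + a_j + (j-i+1))/(j-i+1))`. For every real `s > 0`,
the family `(D a)^{-s}` is summable if and only if `s > 2/n`; that is, the abscissa of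
convergence of `ζ^{irr}_{SL_n(ℂ)}(s) = ∑_a (D a)^{-s}` equals `r/κ` with
`κ = n(n-1)/2` the number of positive roots of `A_{n-1}`. -/
theorem witten_zeta_abscissa_SLn (n : ℕ) (hn : 2 ≤ n) (r : ℕ) (hr : r = n - 1)
    (D : (Fin r → ℕ) → ℝ)
    (hD : ∀ a : Fin r → ℕ,
      D a = ∏ i : Fin r, ∏ j : Fin r,
        if i ≤ j then
          ((∑ k ∈ Finset.Icc i j, (a k : ℝ)) + ((j : ℕ) - (i : ℕ) + 1)) /
            ((j : ℕ) - (i : ℕ) + 1)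
        else 1)
    (s : ℝ) (hs : 0 < s) :
    Summable (fun a : Fin r → ℕ => (D a) ^ (-s)) ↔ 2 / (n : ℝ) < s := by
  have hn1 : n = r + 1 := by omega
  have hr1 : 1 ≤ r := by omega
  subst hn1
  set K := (Finset.univ.filter fun p : Fin r × Fin r => p.1 ≤ p.2).card with hK
  have h2K : 2 * K = r * (r + 1) := aux_two_K
  set F : (Fin r → ℕ) → Fin r → Fin r → ℝ := fun a i j =>
    if i ≤ j then
      ((∑ k ∈ Finset.Icc i j, (a k : ℝ)) + ((j : ℕ) - (i : ℕ) + 1)) /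
        ((j : ℕ) - (i : ℕ) + 1)
    else 1 with hFdef
  have hDF : ∀ a, D a = ∏ i, ∏ j, F a i j := hD
  -- every factor is at least 1
  have hF1 : ∀ a i j, (1 : ℝ) ≤ F a i j := by
    intro a i j
    simp only [hFdef]
    split_ifs with h
    · have hij : ((i : ℕ) : ℝ) ≤ ((j : ℕ) : ℝ) := by exact_mod_cast (Fin.le_def.1 h)
      have hL : (0 : ℝ) < ((j : ℕ) : ℝ) - ((i : ℕ) : ℝ) + 1 := by linarith
      rw [le_div_iff₀ hL]
      have hS : 0 ≤ ∑ k ∈ Finset.Icc i j, ((a k : ℝ)) :=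
        Finset.sum_nonneg fun _ _ => by positivity
      linarith
    · exact le_refl 1
  have hD1 : ∀ a, (1 : ℝ) ≤ D a := by
    intro a
    rw [hDF a]
    calc (1:ℝ) = ∏ _i : Fin r, ∏ _j : Fin r, 1 := by simp
    _ ≤ ∏ i, ∏ j, F a i j := by
      refine Finset.prod_le_prod (fun _ _ => by positivity) (fun i _ => ?_)
      refine Finset.prod_le_prod (fun _ _ => zero_le_one) (fun j _ => hF1 a i j)
  have hDpos : ∀ a, (0 : ℝ) < D a := fun a => lt_of_lt_of_le one_pos (hD1 a)
  -- the key single-factor lower bound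
  have hbound : ∀ (a : Fin r → ℕ) (i j k : Fin r), i ≤ k → k ≤ j →
      ((a k : ℝ) + 1) ≤ ((r : ℝ) + 1) * F a i j := by
    intro a i j k hik hkj
    have hij : i ≤ j := le_trans hik hkj
    have hmem : k ∈ Finset.Icc i j := Finset.mem_Icc.2 ⟨hik, hkj⟩
    have hS : (a k : ℝ) ≤ ∑ k' ∈ Finset.Icc i j, (a k' : ℝ) :=
      Finset.single_le_sum (f := fun k' => (a k' : ℝ)) (fun _ _ => by positivity) hmem
    have hS0 : 0 ≤ ∑ k' ∈ Finset.Icc i j, (a k' : ℝ) :=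
      Finset.sum_nonneg fun _ _ => by positivity
    simp only [hFdef]
    rw [if_pos hij]
    have hijv : ((i : ℕ) : ℝ) ≤ ((j : ℕ) : ℝ) := by exact_mod_cast (Fin.le_def.1 hij)
    have hjr : ((j : ℕ) : ℝ) ≤ (r : ℝ) - 1 := by
      have := j.isLt
      have : ((j : ℕ) : ℝ) + 1 ≤ (r : ℝ) := by exact_mod_cast this
      linarith
    have hi0 : (0 : ℝ) ≤ ((i : ℕ) : ℝ) := by positivity
    have hLpos : (0 : ℝ) < ((j : ℕ) : ℝ) - ((i : ℕ) : ℝ) + 1 := by linarith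
    rw [← mul_div_assoc, le_div_iff₀ hLpos]
    nlinarith [hS, hS0, hijv, hjr, hi0]
  -- lower bound for D a
  have hlow : ∀ a : Fin r → ℕ,
      (∏ k, ((a k : ℝ) + 1) ^ (r + 1)) ≤ ((r : ℝ) + 1) ^ (2 * K) * (D a) ^ 2 := by
    intro a
    have hD2 : (D a) ^ 2 = ∏ i, ∏ j, (F a i j) ^ 2 := by
      rw [hDF a, ← Finset.prod_pow]
      exact Finset.prod_congr rfl fun i _ => (Finset.prod_pow _ _ _).symm
    have hC : ((r : ℝ) + 1) ^ (2 * K)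
        = ∏ i : Fin r, ∏ j : Fin r, (if i ≤ j then ((r : ℝ) + 1) ^ 2 else 1) := by
      rw [aux_ite_const, ← pow_mul, hK]
    rw [hD2, hC, ← Finset.prod_mul_distrib, ← aux_ite_pair]
    refine Finset.prod_le_prod (fun i _ => Finset.prod_nonneg fun j _ => ?_) (fun i _ => ?_)
    · split_ifs with h
      · positivity
      · exact zero_le_one
    rw [← Finset.prod_mul_distrib]
    refine Finset.prod_le_prod (fun j _ => ?_) (fun j _ => ?_)
    · split_ifs with h
      · positivity
      · exact zero_le_one
    by_cases h : i ≤ j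
    · rw [if_pos h, if_pos h]
      have h1 := hbound a i j i (le_refl i) h
      have h2 := hbound a i j j h (le_refl j)
      have hFn : 0 ≤ F a i j := le_trans zero_le_one (hF1 a i j)
      nlinarith [h1, h2, hFn]
    · rw [if_neg h, if_neg h]
      have : F a i j = 1 := by simp only [hFdef]; rw [if_neg h]
      rw [this]
      norm_num
  -- upper bound for D a on boxes
  have hup : ∀ (a : Fin r → ℕ) (m : ℕ), 1 ≤ m → (∀ i, a i < m) → D a ≤ (m : ℝ) ^ K := by
    intro a m hm ham
    rw [hDF a, ← aux_ite_const (m : ℝ)]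
    refine Finset.prod_le_prod
      (fun i _ => Finset.prod_nonneg fun j _ => le_trans zero_le_one (hF1 a i j))
      (fun i _ => ?_)
    refine Finset.prod_le_prod (fun j _ => le_trans zero_le_one (hF1 a i j)) (fun j _ => ?_)
    simp only [hFdef]
    split_ifs with h
    · have hijv : ((i : ℕ) : ℝ) ≤ ((j : ℕ) : ℝ) := by exact_mod_cast (Fin.le_def.1 h)
      have hLpos : (0 : ℝ) < ((j : ℕ) : ℝ) - ((i : ℕ) : ℝ) + 1 := by linarith
      rw [div_le_iff₀ hLpos]
      have hcard : ((Finset.Icc i j).card : ℝ) = ((j : ℕ) : ℝ) - ((i : ℕ) : ℝ) + 1 := by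
        rw [Fin.card_Icc]
        have hle : (i : ℕ) ≤ (j : ℕ) + 1 := by
          have := Fin.le_def.1 h; omega
        push_cast [Nat.cast_sub hle]
        ring
      have hsum : ∑ k ∈ Finset.Icc i j, (a k : ℝ)
          ≤ (Finset.Icc i j).card • ((m : ℝ) - 1) := by
        refine Finset.sum_le_card_nsmul _ _ _ fun k _ => ?_
        have := ham k
        have : (a k : ℝ) + 1 ≤ (m : ℝ) := by exact_mod_cast this
        linarith
      rw [nsmul_eq_mul, hcard] at hsum
      have hm1 : (1 : ℝ) ≤ (m : ℝ) := by exact_mod_cast hm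
      nlinarith [hsum, hLpos, hm1]
    · exact le_refl 1
  constructor
  · -- summable → 2/(r+1) < s
    intro hsum
    by_contra hle
    push_neg at hle
    have hrpos : (0 : ℝ) < (r : ℝ) + 1 := by positivity
    have hKr : 2 * (K : ℝ) = (r : ℝ) * ((r : ℝ) + 1) := by exact_mod_cast h2K
    have hKs : (K : ℝ) * s ≤ (r : ℝ) := by
      have h1 : (K : ℝ) * s ≤ (K : ℝ) * (2 / ((r : ℝ) + 1)) := by
        refine mul_le_mul_of_nonneg_left ?_ (Nat.cast_nonneg _)
        calc s ≤ 2 / ((r + 1 : ℕ) : ℝ) := hle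
          _ = 2 / ((r : ℝ) + 1) := by push_cast; ring
      have h2 : (K : ℝ) * (2 / ((r : ℝ) + 1)) = (r : ℝ) := by
        field_simp
        linarith [hKr]
      linarith
    have hfpos : ∀ a : Fin r → ℕ, 0 ≤ D a ^ (-s) := fun a => Real.rpow_nonneg (hDpos a).le _
    set B : ℕ → Finset (Fin r → ℕ) :=
      fun t => Fintype.piFinset fun _ : Fin r => Finset.Ico (2^t) (2^(t+1)) with hB
    have hcard : ∀ t, (B t).card = (2^t)^r := by
      intro t
      rw [hB]
      rw [Fintype.card_piFinset]
      have h1 : (Finset.Ico (2^t) (2^(t+1))).card = 2^t := by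
        rw [Nat.card_Ico]
        have : 2^(t+1) = 2^t * 2 := pow_succ 2 t
        omega
      simp [h1]
    have hblock : ∀ t : ℕ, (2:ℝ) ^ (-(r:ℝ)) ≤ ∑ a ∈ B t, D a ^ (-s) := by
      intro t
      have hmem : ∀ a ∈ B t, ((2:ℝ) ^ ((t+1) * K)) ^ (-s) ≤ D a ^ (-s) := by
        intro a ha
        have hlt : ∀ i, a i < 2^(t+1) := by
          intro i
          exact (Finset.mem_Ico.1 (Fintype.mem_piFinset.1 ha i)).2
        have h1 : D a ≤ ((2^(t+1) : ℕ) : ℝ) ^ K :=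
          hup a (2^(t+1)) Nat.one_le_two_pow hlt
        have h2 : ((2^(t+1) : ℕ) : ℝ) ^ K = (2:ℝ) ^ ((t+1) * K) := by
          push_cast
          rw [← pow_mul]
        rw [h2] at h1
        exact Real.rpow_le_rpow_of_nonpos (hDpos a) h1 (by linarith)
      calc (2:ℝ) ^ (-(r:ℝ)) ≤ ((B t).card : ℝ) * ((2:ℝ) ^ ((t+1) * K)) ^ (-s) := by
            rw [hcard t]
            have e1 : (((2^t)^r : ℕ) : ℝ) = (2:ℝ) ^ (((t * r : ℕ)):ℝ) := by
              rw [Real.rpow_natCast]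
              push_cast
              rw [← pow_mul]
            have e2 : ((2:ℝ) ^ ((t+1)*K)) ^ (-s) = (2:ℝ) ^ (-((((t+1)*K : ℕ)):ℝ) * s) := by
              rw [← Real.rpow_natCast 2 ((t+1)*K), ← Real.rpow_mul (by norm_num : (0:ℝ) ≤ 2)]
              congr 1
              ring
            rw [e1, e2, ← Real.rpow_add (by norm_num : (0:ℝ) < 2)]
            apply Real.rpow_le_rpow_of_exponent_le (by norm_num : (1:ℝ) ≤ 2)
            push_cast
            nlinarith [hKs, hs.le, mul_le_mul_of_nonneg_left hKs
              (by positivity : (0:ℝ) ≤ (t:ℝ) + 1)]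
        _ ≤ ∑ a ∈ B t, D a ^ (-s) := by
            have h3 := Finset.card_nsmul_le_sum (B t) _ _ hmem
            rwa [nsmul_eq_mul] at h3
    have hdisj : ∀ t u : ℕ, t ≠ u → ∀ a, a ∈ B t → a ∉ B u := by
      intro t u htu a hat hau
      have h1 := Finset.mem_Ico.1 (Fintype.mem_piFinset.1 hat ⟨0, hr1⟩)
      have h2 := Finset.mem_Ico.1 (Fintype.mem_piFinset.1 hau ⟨0, hr1⟩)
      rcases Nat.lt_or_ge t u with h | h
      · have : 2^(t+1) ≤ 2^u := Nat.pow_le_pow_right (by norm_num) h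
        omega
      · have h' : u < t := by omega
        have : 2^(u+1) ≤ 2^t := Nat.pow_le_pow_right (by norm_num) h'
        omega
    obtain ⟨T, hT⟩ := exists_nat_gt ((∑' a : Fin r → ℕ, D a ^ (-s)) / (2:ℝ)^(-(r:ℝ)))
    have hsum_le : ∑ t ∈ Finset.range T, ∑ a ∈ B t, D a ^ (-s)
        ≤ ∑' a : Fin r → ℕ, D a ^ (-s) := by
      rw [← Finset.sum_biUnion]
      · exact hsum.sum_le_tsum _ (fun a _ => hfpos a)
      · intro t _ u _ htu
        refine Finset.disjoint_left.2 ?_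
        intro x hx hx'
        exact hdisj t u htu x hx hx'
    have hTc : (T:ℝ) * (2:ℝ)^(-(r:ℝ)) ≤ ∑ t ∈ Finset.range T, ∑ a ∈ B t, D a ^ (-s) := by
      calc (T:ℝ) * (2:ℝ)^(-(r:ℝ)) = ∑ _t ∈ Finset.range T, (2:ℝ)^(-(r:ℝ)) := by
            rw [Finset.sum_const, Finset.card_range, nsmul_eq_mul]
        _ ≤ _ := Finset.sum_le_sum fun t _ => hblock t
    have hc0 : (0:ℝ) < (2:ℝ)^(-(r:ℝ)) := Real.rpow_pos_of_pos two_pos _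
    rw [div_lt_iff₀ hc0] at hT
    linarith
  · -- 2/(r+1) < s → summable
    intro hgt
    have hrpos : (0:ℝ) < (r:ℝ) + 1 := by positivity
    have hgt' : 2 / ((r:ℝ)+1) < s := by
      calc 2 / ((r:ℝ)+1) = 2 / (((r+1:ℕ)):ℝ) := by push_cast; ring
        _ < s := hgt
    set c : ℝ := ((r:ℝ)+1) * s / 2 with hc
    have hc1 : 1 < c := by
      rw [div_lt_iff₀ hrpos] at hgt'
      rw [hc]
      linarith
    have hg := aux_summable_pi c hc1 r
    set C : ℝ := ((r:ℝ)+1) ^ ((K:ℝ) * s) with hCdef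
    refine Summable.of_nonneg_of_le (fun a => Real.rpow_nonneg (hDpos a).le _) ?_ (hg.mul_left C)
    intro a
    have hX : (0:ℝ) < ∏ k : Fin r, ((a k:ℝ)+1)^(r+1) := by positivity
    have hC2 : (0:ℝ) < ((r:ℝ)+1)^(2*K) := by positivity
    have h2 : (∏ k : Fin r, ((a k:ℝ)+1)^(r+1)) / ((r:ℝ)+1)^(2*K) ≤ (D a)^2 := by
      rw [div_le_iff₀ hC2]
      calc (∏ k : Fin r, ((a k:ℝ)+1)^(r+1)) ≤ ((r:ℝ)+1)^(2*K) * (D a)^2 := hlow a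
        _ = (D a)^2 * ((r:ℝ)+1)^(2*K) := by ring
    have h3 := Real.rpow_le_rpow_of_nonpos (by positivity) h2 (by linarith : -(s/2) ≤ 0)
    have hL : ((D a)^2) ^ (-(s/2)) = D a ^ (-s) := by
      rw [← Real.rpow_natCast (D a) 2, ← Real.rpow_mul (hDpos a).le]
      norm_num
      congr 1
      ring
    have hR : ((∏ k : Fin r, ((a k:ℝ)+1)^(r+1)) / ((r:ℝ)+1)^(2*K)) ^ (-(s/2))
        = C * ∏ i : Fin r, ((a i:ℝ)+1) ^ (-c) := by
      rw [Real.div_rpow hX.le (by positivity)]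
      have e1 : ((((r:ℝ)+1)^(2*K)) : ℝ) ^ (-(s/2)) = ((r:ℝ)+1) ^ (-((K:ℝ)*s)) := by
        rw [← Real.rpow_natCast ((r:ℝ)+1) (2*K), ← Real.rpow_mul hrpos.le]
        congr 1
        push_cast
        ring
      have e2 : (∏ k : Fin r, ((a k:ℝ)+1)^(r+1)) ^ (-(s/2))
          = ∏ i : Fin r, ((a i:ℝ)+1) ^ (-c) := by
        rw [← Real.finset_prod_rpow _ _ (fun i _ => by positivity) _]
        refine Finset.prod_congr rfl fun k _ => ?_
        rw [← Real.rpow_natCast ((a k:ℝ)+1) (r+1), ← Real.rpow_mul (by positivity)]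
        congr 1
        rw [hc]
        push_cast
        ring
      rw [e1, e2, Real.rpow_neg hrpos.le, div_eq_mul_inv, inv_inv, hCdef]
      ring
    rw [hL, hR] at h3
    exact h3
end
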